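/- arXiv:1511.01340 — 11 statements merged into one kernel-verified Lean document; each statement's English description precedes it below -/
import Mathlib

section
/- Under the stated setup, if both |a| ≤ 1 and |b| ≤ 1, then the contact point ζ₃ lies on the ellipse with foci a and b: |ζ₃ − a| + |ζ₃ − b| = |1 − conj(a)·b|. -/
open Complex

private lemma key_id (z1 z2 z3 w1 w2 w3 a b u v : ℂ)
    (h1 : z1 * w1 = 1) (h2 : z2 * w2 = 1) (h3 : z3 * w3 = 1)
    (hR1 : z1*z2*z3*(u*v) = z1+z2+z3-a-b)
    (hR2 : z1*z2*z3*(u+v) = z1*z2+z1*z3+z2*z3-a*b) :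
    (z1-a)*(z2-a)*(z3-b) * ((w1-u)*(w2-u)*(w3-v))
    + (z1-b)*(z2-b)*(z3-a) * ((w1-v)*(w2-v)*(w3-u))
    + 2*((1-a*u)*(1-b*v)*(1-u*b)*(1-a*v))
    = (1-u*b)*(1-a*v) * (((z3-z1)*(z3-z2)-(z3-a)*(z3-b)) * ((w3-w1)*(w3-w2)-(w3-u)*(w3-v))) := by
  linear_combination (-w1*w2*w3*a*b + z3*w1*w2*w3*b + z3*w1*w2*w3*a + z3*w1*w2*w3*a*b^2*u*v - z3^2*w1*w2*w3*a*b*u*v + z2*w1*w2*w3*a*b*v + z2*w1*w2*w3*a*b*u - z2*w1*w2*w3*a*b^2*u*v + z2*z3*w1*w2*w3 - z2*z3*w1*w2*w3*b*v - z2*z3*w1*w2*w3*b*u - z2*z3*w1*w2*w3*a*v - z2*z3*w1*w2*w3*a*u - z2*z3^2*w1*w2*w3*v - z2*z3^2*w1*w2*w3*u + z2*z3^2*w1*w2*w3*a*u*v + z2*z3^3*w1*w2*w3*u*v + z2^2*z3*w1*w2*w3*b*u*v + z1*w1*w2*w3*a*b*v + z1*w1*w2*w3*a*b*u - z1*w1*w2*w3*a*b^2*u*v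 + z1*z3*w1*w2*w3 - z1*z3*w1*w2*w3*b*v - z1*z3*w1*w2*w3*b*u - z1*z3*w1*w2*w3*a*v - z1*z3*w1*w2*w3*a*u - z1*z3^2*w1*w2*w3*v - z1*z3^2*w1*w2*w3*u + z1*z3^2*w1*w2*w3*a*u*v + z1*z3^3*w1*w2*w3*u*v - z1*z2*w1*w2*w3 - z1*z2*w1*w2*w3*a*b*v^2 - z1*z2*w1*w2*w3*a*b*u*v - z1*z2*w1*w2*w3*a*b*u^2 + z1*z2*w1*w2*w3*a*b^2*u*v^2 + z1*z2*w1*w2*w3*a*b^2*u^2*v - 2*z1*z2*z3*w1*w2*w3*v - 2*z1*z2*z3*w1*w2*w3*u + z1*z2*z3*w1*w2*w3*b*v^2 + 4*z1*z2*z3*w1*w2*w3*b*u*v + z1*z2*z3*w1*w2*w3*b*u^2 + z1*z2*z3*w1*w2*w3*a*v^2 + 3*z1*z2*z3*w1*w2*w3*a*u*v + z1*z2*z3*w1*w2*w3*a*u^2 - 2*z1*z2*z3*w1*w2*w3*a*b*u*v^2 - 2*z1*z2*z3*w1*w2*w3*a*b*u^2*v + z1*z2*z3*w1*w2*w3*a*b^2*u^2*v^2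 + z1*z2*z3^2*w1*w2*w3*v^2 + 3*z1*z2*z3^2*w1*w2*w3*u*v + z1*z2*z3^2*w1*w2*w3*u^2 - z1*z2*z3^2*w1*w2*w3*a*u*v^2 - z1*z2*z3^2*w1*w2*w3*a*u^2*v + z1*z2*z3^2*w1*w2*w3*a*b*u^2*v^2 - z1*z2*z3^3*w1*w2*w3*u*v^2 - z1*z2*z3^3*w1*w2*w3*u^2*v + z1*z2^2*w1*w2*w3*b*u*v + z1*z2^2*z3*w1*w2*w3*u*v - 2*z1*z2^2*z3*w1*w2*w3*b*u*v^2 - 2*z1*z2^2*z3*w1*w2*w3*b*u^2*v + z1*z2^2*z3^2*w1*w2*w3*u*v^2 + z1*z2^2*z3^2*w1*w2*w3*u^2*v - z1*z2^2*z3^2*w1*w2*w3*b*u^2*v^2 - z1*z2^2*z3^3*w1*w2*w3*u^2*v^2 + z1^2*z3*w1*w2*w3*b*u*v + z1^2*z2*w1*w2*w3*b*u*v + z1^2*z2*z3*w1*w2*w3*u*v - 2*z1^2*z2*z3*w1*w2*w3*b*u*v^2 - 2*z1^2*z2*z3*w1*w2*w3*b*u^2*v + z1^2*z2*z3^2*w1*w2*w3*u*v^2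 + z1^2*z2*z3^2*w1*w2*w3*u^2*v - z1^2*z2*z3^2*w1*w2*w3*b*u^2*v^2 - z1^2*z2*z3^3*w1*w2*w3*u^2*v^2 + z1^2*z2^2*w1*w2*w3*u*v - z1^2*z2^2*w1*w2*w3*b*u*v^2 - z1^2*z2^2*w1*w2*w3*b*u^2*v + z1^2*z2^2*z3*w1*w2*w3*b*u*v^3 + z1^2*z2^2*z3*w1*w2*w3*b*u^2*v^2 + z1^2*z2^2*z3*w1*w2*w3*b*u^3*v - z1^2*z2^2*z3^2*w1*w2*w3*u*v^3 - 3*z1^2*z2^2*z3^2*w1*w2*w3*u^2*v^2 - z1^2*z2^2*z3^2*w1*w2*w3*u^3*v + z1^2*z2^2*z3^2*w1*w2*w3*b*u^2*v^3 + z1^2*z2^2*z3^2*w1*w2*w3*b*u^3*v^2 + z1^2*z2^2*z3^3*w1*w2*w3*u^2*v^3 + z1^2*z2^2*z3^3*w1*w2*w3*u^3*v^2) * hR1 + (-2*z3*w1*w2*w3 - z3*w1*w2*w3*b^2*u*v + z3^2*w1*w2*w3*v + z3^2*w1*w2*w3*u + z3^2*w1*w2*w3*b*u*v - z3^3*w1*w2*w3*u*v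 + z2*w1*w2*w3*b^2*u*v + z2*z3*w1*w2*w3*v + z2*z3*w1*w2*w3*u - z2*z3^2*w1*w2*w3*u*v - z2^2*w1*w2*w3*b*u*v + z1*w1*w2*w3*b^2*u*v + z1*z3*w1*w2*w3*v + z1*z3*w1*w2*w3*u - z1*z3^2*w1*w2*w3*u*v + z1*z2*w1*w2*w3*v + z1*z2*w1*w2*w3*u - 2*z1*z2*w1*w2*w3*b*u*v - z1*z2*w1*w2*w3*b^2*u*v^2 - z1*z2*w1*w2*w3*b^2*u^2*v - z1*z2*z3*w1*w2*w3*u*v + z1*z2*z3*w1*w2*w3*b*u*v^2 + z1*z2*z3*w1*w2*w3*b*u^2*v - z1*z2*z3*w1*w2*w3*b^2*u^2*v^2 - 2*z1*z2*z3^2*w1*w2*w3*u*v^2 - 2*z1*z2*z3^2*w1*w2*w3*u^2*v + 2*z1*z2*z3^3*w1*w2*w3*u^2*v^2 - z1*z2^2*w1*w2*w3*u*v + z1*z2^2*w1*w2*w3*b*u*v^2 + z1*z2^2*w1*w2*w3*b*u^2*v - z1*z2^2*z3*w1*w2*w3*u*v^2 - z1*z2^2*z3*w1*w2*w3*u^2*v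 + 2*z1*z2^2*z3*w1*w2*w3*b*u^2*v^2 + z1*z2^2*z3^2*w1*w2*w3*u^2*v^2 - z1^2*w1*w2*w3*b*u*v - z1^2*z2*w1*w2*w3*u*v + z1^2*z2*w1*w2*w3*b*u*v^2 + z1^2*z2*w1*w2*w3*b*u^2*v - z1^2*z2*z3*w1*w2*w3*u*v^2 - z1^2*z2*z3*w1*w2*w3*u^2*v + 2*z1^2*z2*z3*w1*w2*w3*b*u^2*v^2 + z1^2*z2*z3^2*w1*w2*w3*u^2*v^2 + z1^2*z2^2*z3*w1*w2*w3*u^2*v^2 - z1^2*z2^2*z3*w1*w2*w3*b*u^2*v^3 - z1^2*z2^2*z3*w1*w2*w3*b*u^3*v^2 + z1^2*z2^2*z3^2*w1*w2*w3*u^2*v^3 + z1^2*z2^2*z3^2*w1*w2*w3*u^3*v^2 - z1^2*z2^2*z3^2*w1*w2*w3*b*u^3*v^3 - z1^2*z2^2*z3^3*w1*w2*w3*u^3*v^3) * hR2 + (2*a*b*u*v - w3*a*b*v - w3*a*b*u - w2*a*b*v - w2*a*b*u + w2*w3*a*b - w2*w3*a*b^2*v - w2*w3*a*b^2*u - w2*w3*a^2*b*v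 - w2*w3*a^2*b*u + w2*w3*a^2*b^2*u*v - z3*b*u*v - z3*a*u*v - z3*w3 + z3*w3*b*v + z3*w3*b*u + z3*w3*a*v + z3*w3*a*u - z3*w3*a*b*u*v + z3*w2 + z3*w2*a*b*u*v - z3*w2*w3*b + z3*w2*w3*b^2*v + z3*w2*w3*b^2*u - z3*w2*w3*a + 2*z3*w2*w3*a*b*v + 2*z3*w2*w3*a*b*u + z3*w2*w3*a^2*v + z3*w2*w3*a^2*u - z3^2*w2*w3 - z3^2*w2*w3*b^2*u*v - z3^2*w2*w3*a*b*u*v - z3^2*w2*w3*a^2*u*v - z2*b*u*v - z2*a*u*v + z2*w3 + z2*w3*a*b*u*v - z2*w2 + z2*w2*b*v + z2*w2*b*u + z2*w2*a*v + z2*w2*a*u - z2*w2*a*b*u*v + z2*w2*w3*a*b*v + z2*w2*w3*a*b*u + z2*w2*w3*a*b^2*v^2 + z2*w2*w3*a*b^2*u*v + z2*w2*w3*a*b^2*u^2 + z2*w2*w3*a^2*b*v^2 + z2*w2*w3*a^2*b*u*v + z2*w2*w3*a^2*b*u^2 - z2*w2*w3*a^2*b^2*u*v^2 - z2*w2*w3*a^2*b^2*u^2*v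 + 2*z2*z3*u*v - z2*z3*w3*v - z2*z3*w3*u - z2*z3*w2*v - z2*z3*w2*u + z2*z3*w2*w3 - z2*z3*w2*w3*b^2*v^2 - 3*z2*z3*w2*w3*b^2*u*v - z2*z3*w2*w3*b^2*u^2 - 3*z2*z3*w2*w3*a*b*v^2 - 6*z2*z3*w2*w3*a*b*u*v - 3*z2*z3*w2*w3*a*b*u^2 + 2*z2*z3*w2*w3*a*b^2*u*v^2 + 2*z2*z3*w2*w3*a*b^2*u^2*v - z2*z3*w2*w3*a^2*v^2 - 3*z2*z3*w2*w3*a^2*u*v - z2*z3*w2*w3*a^2*u^2 + 2*z2*z3*w2*w3*a^2*b*u*v^2 + 2*z2*z3*w2*w3*a^2*b*u^2*v - z2*z3*w2*w3*a^2*b^2*u^2*v^2 + z2*z3^2*w2*w3*v + z2*z3^2*w2*w3*u + z2*z3^2*w2*w3*b*u*v + z2*z3^2*w2*w3*b^2*u*v^2 + z2*z3^2*w2*w3*b^2*u^2*v + z2*z3^2*w2*w3*a*u*v + z2*z3^2*w2*w3*a*b*u*v^2 + z2*z3^2*w2*w3*a*b*u^2*v - z2*z3^2*w2*w3*a*b^2*u^2*v^2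 + z2*z3^2*w2*w3*a^2*u*v^2 + z2*z3^2*w2*w3*a^2*u^2*v - z2*z3^2*w2*w3*a^2*b*u^2*v^2 - z2^2*w2*w3 - z2^2*w2*w3*a*b*v^2 - z2^2*w2*w3*a*b*u*v - z2^2*w2*w3*a*b*u^2 + z2^2*z3*w2*w3*b*v^2 + 2*z2^2*z3*w2*w3*b*u*v + z2^2*z3*w2*w3*b*u^2 + z2^2*z3*w2*w3*a*v^2 + 2*z2^2*z3*w2*w3*a*u*v + z2^2*z3*w2*w3*a*u^2 - z2^2*z3^2*w2*w3*u*v - z2^2*z3^2*w2*w3*b*u*v^2 - z2^2*z3^2*w2*w3*b*u^2*v - z2^2*z3^2*w2*w3*a*u*v^2 - z2^2*z3^2*w2*w3*a*u^2*v + z2^2*z3^2*w2*w3*a*b*u^2*v^2 + z1*w2*w3*a*b*v + z1*w2*w3*a*b*u + z1*z3*w2*w3 - z1*z3*w2*w3*b*v - z1*z3*w2*w3*b*u - z1*z3*w2*w3*a*v - z1*z3*w2*w3*a*u - z1*z3*w2*w3*a*b*u*v + z1*z3^2*w2*w3*b*u*v + z1*z3^2*w2*w3*a*u*v - z1*z2*w2*w3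 - z1*z2*w2*w3*a*b*v^2 - z1*z2*w2*w3*a*b*u*v - z1*z2*w2*w3*a*b*u^2 + z1*z2*z3*w2*w3*b*v^2 + 2*z1*z2*z3*w2*w3*b*u*v + z1*z2*z3*w2*w3*b*u^2 + z1*z2*z3*w2*w3*a*v^2 + 2*z1*z2*z3*w2*w3*a*u*v + z1*z2*z3*w2*w3*a*u^2 - z1*z2*z3^2*w2*w3*u*v - z1*z2*z3^2*w2*w3*b*u*v^2 - z1*z2*z3^2*w2*w3*b*u^2*v - z1*z2*z3^2*w2*w3*a*u*v^2 - z1*z2*z3^2*w2*w3*a*u^2*v + z1*z2*z3^2*w2*w3*a*b*u^2*v^2 + z1*z2^2*w2*w3*v + z1*z2^2*w2*w3*u - z1*z2^2*w2*w3*b*u*v - z1*z2^2*w2*w3*a*u*v + z1*z2^2*w2*w3*a*b*u*v^2 + z1*z2^2*w2*w3*a*b*u^2*v - z1*z2^2*z3*w2*w3*v^2 - z1*z2^2*z3*w2*w3*u*v - z1*z2^2*z3*w2*w3*u^2 - z1*z2^2*z3*w2*w3*a*b*u^2*v^2 + z1*z2^2*z3^2*w2*w3*u*v^2 + z1*z2^2*z3^2*w2*w3*u^2*v)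 * h1 + (-1 + b*v + b*u + a*v + a*u + a*b*u*v + w3*a*b^2*v^2 + w3*a*b^2*u*v + w3*a*b^2*u^2 + w3*a^2*b*v^2 + w3*a^2*b*u*v + w3*a^2*b*u^2 - w3*a^2*b^2*u*v^2 - w3*a^2*b^2*u^2*v - w1*a*b*v - w1*a*b*u + w1*w3*a*b - w1*w3*a*b^2*v - w1*w3*a*b^2*u - w1*w3*a^2*b*v - w1*w3*a^2*b*u + w1*w3*a^2*b^2*u*v - z3*v - z3*u - z3*b*u*v - z3*a*u*v + z3*w3*b*v + z3*w3*b*u - z3*w3*b^2*v^2 - 3*z3*w3*b^2*u*v - z3*w3*b^2*u^2 + z3*w3*a*v + z3*w3*a*u - 3*z3*w3*a*b*v^2 - 7*z3*w3*a*b*u*v - 3*z3*w3*a*b*u^2 + 2*z3*w3*a*b^2*u*v^2 + 2*z3*w3*a*b^2*u^2*v - z3*w3*a^2*v^2 - 3*z3*w3*a^2*u*v - z3*w3*a^2*u^2 + 2*z3*w3*a^2*b*u*v^2 + 2*z3*w3*a^2*b*u^2*v - z3*w3*a^2*b^2*u^2*v^2 + z3*w1 + z3*w1*a*b*u*v - z3*w1*w3*b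 + z3*w1*w3*b^2*v + z3*w1*w3*b^2*u - z3*w1*w3*a + 2*z3*w1*w3*a*b*v + 2*z3*w1*w3*a*b*u + z3*w1*w3*a^2*v + z3*w1*w3*a^2*u + z3^2*w3*v + z3^2*w3*u + z3^2*w3*b*u*v + z3^2*w3*b^2*u*v^2 + z3^2*w3*b^2*u^2*v + z3^2*w3*a*u*v + z3^2*w3*a*b*u*v^2 + z3^2*w3*a*b*u^2*v - z3^2*w3*a*b^2*u^2*v^2 + z3^2*w3*a^2*u*v^2 + z3^2*w3*a^2*u^2*v - z3^2*w3*a^2*b*u^2*v^2 - z3^2*w1*w3 - z3^2*w1*w3*b^2*u*v - z3^2*w1*w3*a*b*u*v - z3^2*w1*w3*a^2*u*v - z2*w3 - z2*w3*a*b*v^2 - z2*w3*a*b*u*v - z2*w3*a*b*u^2 + z2*w1*w3*a*b*v + z2*w1*w3*a*b*u + z2*z3*w3*b*v^2 + 2*z2*z3*w3*b*u*v + z2*z3*w3*b*u^2 + z2*z3*w3*a*v^2 + 2*z2*z3*w3*a*u*v + z2*z3*w3*a*u^2 + z2*z3*w1*w3 - z2*z3*w1*w3*b*v - z2*z3*w1*w3*b*u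 - z2*z3*w1*w3*a*v - z2*z3*w1*w3*a*u - z2*z3*w1*w3*a*b*u*v - z2*z3^2*w3*u*v - z2*z3^2*w3*b*u*v^2 - z2*z3^2*w3*b*u^2*v - z2*z3^2*w3*a*u*v^2 - z2*z3^2*w3*a*u^2*v + z2*z3^2*w3*a*b*u^2*v^2 + z2*z3^2*w1*w3*b*u*v + z2*z3^2*w1*w3*a*u*v - z1*b*u*v - z1*a*u*v - z1*w3*a*b*v^2 - z1*w3*a*b*u^2 + 2*z1*z3*u*v - z1*z3*w3*v - z1*z3*w3*u + z1*z3*w3*b*v^2 + 2*z1*z3*w3*b*u*v + z1*z3*w3*b*u^2 + z1*z3*w3*a*v^2 + 2*z1*z3*w3*a*u*v + z1*z3*w3*a*u^2 - z1*z3^2*w3*u*v - z1*z3^2*w3*b*u*v^2 - z1*z3^2*w3*b*u^2*v - z1*z3^2*w3*a*u*v^2 - z1*z3^2*w3*a*u^2*v + z1*z3^2*w3*a*b*u^2*v^2 + z1*z2*w3*v + z1*z2*w3*u - z1*z2*w3*b*u*v - z1*z2*w3*a*u*v + z1*z2*w3*a*b*u*v^2 + z1*z2*w3*a*b*u^2*v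 - z1*z2*z3*w3*v^2 - z1*z2*z3*w3*u*v - z1*z2*z3*w3*u^2 - z1*z2*z3*w3*a*b*u^2*v^2 + z1*z2*z3^2*w3*u*v^2 + z1*z2*z3^2*w3*u^2*v) * h2 + (-1 + b*v + b*u - 2*b^2*u*v + a*v + a*u - 2*a*b*v^2 - 6*a*b*u*v - 2*a*b*u^2 + a*b^2*u*v^2 + a*b^2*u^2*v - 2*a^2*u*v + a^2*b*u*v^2 + a^2*b*u^2*v - a^2*b^2*u^2*v^2 + w2*a*b*v + w2*a*b*u + w2*a*b^2*u*v + w2*a^2*b*u*v + w1*a*b*v + w1*a*b*u + w1*a*b^2*u*v + w1*a^2*b*u*v - w1*w2*a*b - w1*w2*a^2*b^2*u*v + z3*v + z3*u + z3*b*u*v + z3*b^2*u*v^2 + z3*b^2*u^2*v + z3*a*u*v + z3*a*b*u*v^2 + z3*a*b*u^2*v - z3*a*b^2*u^2*v^2 + z3*a^2*u*v^2 + z3*a^2*u^2*v - z3*a^2*b*u^2*v^2 - z3*w2 - z3*w2*b^2*u*v - z3*w2*a*b*u*v - z3*w2*a^2*u*v - z3*w1 - z3*w1*b^2*u*v - z3*w1*a*b*u*v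 - z3*w1*a^2*u*v + z3*w1*w2*b + z3*w1*w2*a - z3*w1*w2*a*b*v - z3*w1*w2*a*b*u + z3*w1*w2*a*b^2*u*v + z3*w1*w2*a^2*b*u*v + z2*b*u*v + z2*a*u*v + z2*a*b*u*v^2 + z2*a*b*u^2*v - 2*z2*w1*a*b*u*v - z2*z3*u*v - z2*z3*b*u*v^2 - z2*z3*b*u^2*v - z2*z3*a*u*v^2 - z2*z3*a*u^2*v + z2*z3*a*b*u^2*v^2 + z2*z3*w1*b*u*v + z2*z3*w1*a*u*v + z1*b*u*v + z1*a*u*v + z1*a*b*u*v^2 + z1*a*b*u^2*v - 2*z1*w2*a*b*u*v - z1*z3*u*v - z1*z3*b*u*v^2 - z1*z3*b*u^2*v - z1*z3*a*u*v^2 - z1*z3*a*u^2*v + z1*z3*a*b*u^2*v^2 + z1*z3*w2*b*u*v + z1*z3*w2*a*u*v - z1*z2*u*v - z1*z2*a*b*u^2*v^2 + z1*z2*z3*u*v^2 + z1*z2*z3*u^2*v) * h3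


set_option maxHeartbeats 1000000 in
theorem stmt_0 (a b lam z₁ z₂ z₃ m₁ m₂ m₃ ζ₃ : ℂ)
    (hlam : ‖lam‖ = 1)
    (h12 : z₁ ≠ z₂) (h13 : z₁ ≠ z₃) (h23 : z₂ ≠ z₃)
    (hz1 : ‖z₁‖ = 1) (hz2 : ‖z₂‖ = 1) (hz3 : ‖z₃‖ = 1)
    (hP : ∀ z : ℂ,
      z * (z - a) * (z - b) - lam * (1 - (starRingEnd ℂ) a * z) * (1 - (starRingEnd ℂ) b * z)
        = (z - z₁) * (z - z₂) * (z - z₃))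
    (ha1 : a ≠ z₁) (ha2 : a ≠ z₂) (ha3 : a ≠ z₃)
    (hb1 : b ≠ z₁) (hb2 : b ≠ z₂) (hb3 : b ≠ z₃)
    (hm1 : m₁ = (z₁ - a) * (z₁ - b) / ((z₁ - z₂) * (z₁ - z₃)))
    (hm2 : m₂ = (z₂ - a) * (z₂ - b) / ((z₂ - z₁) * (z₂ - z₃)))
    (hm3 : m₃ = (z₃ - a) * (z₃ - b) / ((z₃ - z₁) * (z₃ - z₂)))
    (hsum : m₁ + m₂ ≠ 0)
    (hζ : ζ₃ = (m₁ * z₂ + m₂ * z₁) / (m₁ + m₂))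
    (ha : ‖a‖ ≤ 1) (hb : ‖b‖ ≤ 1) :
    ‖ζ₃ - a‖ + ‖ζ₃ - b‖ = ‖1 - (starRingEnd ℂ) a * b‖ := by
  -- basic nonvanishing
  have d12 : z₁ - z₂ ≠ 0 := sub_ne_zero.mpr h12
  have d13 : z₁ - z₃ ≠ 0 := sub_ne_zero.mpr h13
  have d23 : z₂ - z₃ ≠ 0 := sub_ne_zero.mpr h23
  have d21 : z₂ - z₁ ≠ 0 := sub_ne_zero.mpr (Ne.symm h12)
  -- conjugate facts
  have hc1 : z₁ * (starRingEnd ℂ) z₁ = 1 := by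
    rw [Complex.mul_conj, ← Complex.sq_norm, hz1]; norm_num
  have hc2 : z₂ * (starRingEnd ℂ) z₂ = 1 := by
    rw [Complex.mul_conj, ← Complex.sq_norm, hz2]; norm_num
  have hc3 : z₃ * (starRingEnd ℂ) z₃ = 1 := by
    rw [Complex.mul_conj, ← Complex.sq_norm, hz3]; norm_num
  -- Vieta-type relations
  have hR1 : z₁*z₂*z₃*((starRingEnd ℂ) a * (starRingEnd ℂ) b) = z₁+z₂+z₃-a-b := by
    linear_combination (1 + (starRingEnd ℂ) a * (starRingEnd ℂ) b) * hP 0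
      - (1/2 : ℂ) * hP 1 - (1/2 : ℂ) * hP (-1)
  have hR2 : z₁*z₂*z₃*((starRingEnd ℂ) a + (starRingEnd ℂ) b)
      = z₁*z₂+z₁*z₃+z₂*z₃-a*b := by
    linear_combination (1/2 : ℂ) * hP 1 - (1/2 : ℂ) * hP (-1)
      + ((starRingEnd ℂ) a + (starRingEnd ℂ) b) * hP 0
  -- key complex identity
  have hkey := key_id z₁ z₂ z₃ ((starRingEnd ℂ) z₁) ((starRingEnd ℂ) z₂) ((starRingEnd ℂ) z₃)
      a b ((starRingEnd ℂ) a) ((starRingEnd ℂ) b) hc1 hc2 hc3 hR1 hR2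
  -- denominator-free m relations
  have hm1' : m₁ * ((z₁ - z₂) * (z₁ - z₃)) = (z₁ - a) * (z₁ - b) := by
    rw [hm1, div_mul_cancel₀ _ (mul_ne_zero d12 d13)]
  have hm2' : m₂ * ((z₂ - z₁) * (z₂ - z₃)) = (z₂ - a) * (z₂ - b) := by
    rw [hm2, div_mul_cancel₀ _ (mul_ne_zero d21 d23)]
  have hzeta : ζ₃ * (m₁ + m₂) = m₁ * z₂ + m₂ * z₁ := by
    rw [hζ, div_mul_cancel₀ _ hsum]
  -- N and its properties
  obtain ⟨N, hNdef⟩ : ∃ N : ℂ, N = (z₃-z₁)*(z₃-z₂)-(z₃-a)*(z₃-b) := ⟨_, rfl⟩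
  rw [← hNdef] at hkey
  have hcl : N * (z₁ - z₂)^2
      = -((m₁ + m₂) * (((z₁-z₂)*(z₁-z₃)) * ((z₂-z₁)*(z₂-z₃)))) := by
    rw [hNdef]
    linear_combination ((z₂-z₁)*(z₂-z₃)) * hm1' + ((z₁-z₂)*(z₁-z₃)) * hm2'
  have hNne : N ≠ 0 := by
    intro h
    have : (m₁ + m₂) * (((z₁-z₂)*(z₁-z₃)) * ((z₂-z₁)*(z₂-z₃))) = 0 := by
      have := hcl; rw [h] at this; simpa using this.symm
    rcases mul_eq_zero.mp this with h' | h'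
    · exact hsum h'
    · rcases mul_eq_zero.mp h' with h'' | h''
      · exact (mul_ne_zero d12 d13) h''
      · exact (mul_ne_zero d21 d23) h''
  have hbiga : (ζ₃ - a) * N * (z₁-z₂)^2 = -((z₁-a)*(z₂-a)*(z₃-b)) * (z₁-z₂)^2 := by
    rw [hNdef] at hcl ⊢
    linear_combination (ζ₃ - a) * hcl
      - (((z₁-z₂)*(z₁-z₃)) * ((z₂-z₁)*(z₂-z₃))) * hzeta
      - ((z₂-a)*((z₂-z₁)*(z₂-z₃))) * hm1'
      - ((z₁-a)*((z₁-z₂)*(z₁-z₃))) * hm2'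
  have hbigb : (ζ₃ - b) * N * (z₁-z₂)^2 = -((z₁-b)*(z₂-b)*(z₃-a)) * (z₁-z₂)^2 := by
    rw [hNdef] at hcl ⊢
    linear_combination (ζ₃ - b) * hcl
      - (((z₁-z₂)*(z₁-z₃)) * ((z₂-z₁)*(z₂-z₃))) * hzeta
      - ((z₂-b)*((z₂-z₁)*(z₂-z₃))) * hm1'
      - ((z₁-b)*((z₁-z₂)*(z₁-z₃))) * hm2'
  have hsq12 : (z₁-z₂)^2 ≠ 0 := pow_ne_zero _ d12
  have hζa : ζ₃ - a = -((z₁-a)*(z₂-a)*(z₃-b)) / N := by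
    rw [eq_div_iff hNne]
    exact mul_right_cancel₀ hsq12 hbiga
  have hζb : ζ₃ - b = -((z₁-b)*(z₂-b)*(z₃-a)) / N := by
    rw [eq_div_iff hNne]
    exact mul_right_cancel₀ hsq12 hbigb
  -- abbreviations for abs values
  set A : ℝ := ‖(z₁-a)*(z₂-a)*(z₃-b)‖ with hA
  set B : ℝ := ‖(z₁-b)*(z₂-b)*(z₃-a)‖ with hB
  set n : ℝ := ‖N‖ with hn
  set c : ℝ := ‖1 - (starRingEnd ℂ) a * b‖ with hc
  have hnne : n ≠ 0 := by simpa [hn] using hNne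
  have habsa : ‖ζ₃ - a‖ = A / n := by
    rw [hζa, norm_div, norm_neg]
  have habsb : ‖ζ₃ - b‖ = B / n := by
    rw [hζb, norm_div, norm_neg]
  -- product of roots at a and b
  have hprodA : (z₁-a)*(z₂-a)*(z₃-a)
      = lam*((1-(starRingEnd ℂ) a*a)*(1-(starRingEnd ℂ) b*a)) := by
    linear_combination hP a
  have hprodB : (z₁-b)*(z₂-b)*(z₃-b)
      = lam*((1-(starRingEnd ℂ) a*b)*(1-(starRingEnd ℂ) b*b)) := by
    linear_combination hP b
  -- AB computation
  have hnsa : Complex.normSq a ≤ 1 := by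
    rw [← Complex.sq_norm]; nlinarith [norm_nonneg a]
  have hnsb : Complex.normSq b ≤ 1 := by
    rw [← Complex.sq_norm]; nlinarith [norm_nonneg b]
  have hAB : A * B = (1 - Complex.normSq a) * (1 - Complex.normSq b)
      * ‖1 - (starRingEnd ℂ) a * b‖^2 := by
    rw [hA, hB, ← norm_mul]
    have hp : ((z₁-a)*(z₂-a)*(z₃-b)) * ((z₁-b)*(z₂-b)*(z₃-a))
        = lam^2 * ((1-a*(starRingEnd ℂ) a) * (1-b*(starRingEnd ℂ) b)
          * ((1-(starRingEnd ℂ) a*b) * (starRingEnd ℂ) (1-(starRingEnd ℂ) a*b))) := by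
      have hconj : (starRingEnd ℂ) (1-(starRingEnd ℂ) a*b) = 1 - a * (starRingEnd ℂ) b := by
        simp [map_sub, map_mul]
      rw [hconj]
      linear_combination ((z₁-b)*(z₂-b)*(z₃-b)) * hprodA
        + (lam*((1-(starRingEnd ℂ) a*a)*(1-(starRingEnd ℂ) b*a))) * hprodB
    rw [hp, Complex.mul_conj a, Complex.mul_conj b,
      Complex.mul_conj (1-(starRingEnd ℂ) a*b)]
    rw [norm_mul, norm_mul, norm_mul, norm_pow, hlam]
    have e1 : ‖1 - (Complex.normSq a : ℂ)‖ = 1 - Complex.normSq a := by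
      rw [← Complex.ofReal_one, ← Complex.ofReal_sub, Complex.norm_real,
        Real.norm_of_nonneg (by linarith)]
    have e2 : ‖1 - (Complex.normSq b : ℂ)‖ = 1 - Complex.normSq b := by
      rw [← Complex.ofReal_one, ← Complex.ofReal_sub, Complex.norm_real,
        Real.norm_of_nonneg (by linarith)]
    have e3 : ‖((Complex.normSq (1-(starRingEnd ℂ) a*b) : ℝ) : ℂ)‖
        = ‖1 - (starRingEnd ℂ) a * b‖^2 := by
      rw [Complex.norm_real, Real.norm_of_nonneg (Complex.normSq_nonneg _), Complex.sq_norm]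
    rw [e1, e2, e3]; ring
  -- the squared identity, via the key complex identity
  have hreal : A^2 + B^2 + 2*(A*B) = (c * n)^2 := by
    rw [hAB, hA, hB, hc, hn]
    have : ((Complex.normSq ((z₁-a)*(z₂-a)*(z₃-b))
        + Complex.normSq ((z₁-b)*(z₂-b)*(z₃-a))
        + 2*((1 - Complex.normSq a) * (1 - Complex.normSq b)
            * Complex.normSq (1 - (starRingEnd ℂ) a * b)) : ℝ) : ℂ)
        = ((Complex.normSq (1 - (starRingEnd ℂ) a * b) * Complex.normSq N : ℝ) : ℂ) := by
      have hconjN : (starRingEnd ℂ) N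
          = ((starRingEnd ℂ) z₃ - (starRingEnd ℂ) z₁) * ((starRingEnd ℂ) z₃ - (starRingEnd ℂ) z₂)
            - ((starRingEnd ℂ) z₃ - (starRingEnd ℂ) a) * ((starRingEnd ℂ) z₃ - (starRingEnd ℂ) b) := by
        rw [hNdef]; simp only [map_sub, map_mul]
      push_cast
      rw [← Complex.mul_conj ((z₁-a)*(z₂-a)*(z₃-b)), ← Complex.mul_conj ((z₁-b)*(z₂-b)*(z₃-a)),
        ← Complex.mul_conj (1 - (starRingEnd ℂ) a * b), ← Complex.mul_conj N,
        ← Complex.mul_conj a, ← Complex.mul_conj b, hconjN]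
      simp only [map_sub, map_mul, map_one, Complex.conj_conj]
      linear_combination hkey
    have hr := Complex.ofReal_injective this
    rw [← Complex.sq_norm ((z₁-a)*(z₂-a)*(z₃-b)), ← Complex.sq_norm ((z₁-b)*(z₂-b)*(z₃-a)),
      ← Complex.sq_norm (1-(starRingEnd ℂ) a*b), ← Complex.sq_norm N] at hr
    linear_combination hr
  have hApos : 0 ≤ A := norm_nonneg _
  have hBpos : 0 ≤ B := norm_nonneg _
  have hcnpos : 0 ≤ c * n := mul_nonneg (norm_nonneg _) (norm_nonneg _)
  have hsum' : A + B = c * n := by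
    nlinarith [hreal, hApos, hBpos, hcnpos]
  rw [habsa, habsb]
  rw [← add_div, hsum', mul_div_assoc, div_self hnne, mul_one]
end

section
/- Under the stated setup, if |a| ≤ 1 and |b| > 1 (one focus inside and one outside the unit circle), then the contact point ζ₃ lies on the hyperbola with foci a and b: | |ζ₃ − a| − |ζ₃ − b| | = |1 − conj(a)·b|. -/
open Complex

set_option maxHeartbeats 1000000 in
theorem stmt_2 (a b lam z₁ z₂ z₃ m₁ m₂ m₃ ζ₃ : ℂ)
    (hlam : ‖lam‖ = 1)
    (h12 : z₁ ≠ z₂) (h13 : z₁ ≠ z₃) (h23 : z₂ ≠ z₃)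
    (hz1 : ‖z₁‖ = 1) (hz2 : ‖z₂‖ = 1) (hz3 : ‖z₃‖ = 1)
    (hP : ∀ z : ℂ,
      z * (z - a) * (z - b) - lam * (1 - (starRingEnd ℂ) a * z) * (1 - (starRingEnd ℂ) b * z)
        = (z - z₁) * (z - z₂) * (z - z₃))
    (ha1 : a ≠ z₁) (ha2 : a ≠ z₂) (ha3 : a ≠ z₃)
    (hb1 : b ≠ z₁) (hb2 : b ≠ z₂) (hb3 : b ≠ z₃)
    (hm1 : m₁ = (z₁ - a) * (z₁ - b) / ((z₁ - z₂) * (z₁ - z₃)))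
    (hm2 : m₂ = (z₂ - a) * (z₂ - b) / ((z₂ - z₁) * (z₂ - z₃)))
    (hm3 : m₃ = (z₃ - a) * (z₃ - b) / ((z₃ - z₁) * (z₃ - z₂)))
    (hsum : m₁ + m₂ ≠ 0)
    (hζ : ζ₃ = (m₁ * z₂ + m₂ * z₁) / (m₁ + m₂))
    (ha : ‖a‖ ≤ 1) (hb : 1 < ‖b‖) :
    |‖ζ₃ - a‖ - ‖ζ₃ - b‖| = ‖1 - (starRingEnd ℂ) a * b‖ := by
  set A := (starRingEnd ℂ) a with hA
  set B := (starRingEnd ℂ) b with hB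
  -- basic nonvanishing
  have hz1ne : z₁ ≠ 0 := by intro h; rw [h] at hz1; simp at hz1
  have hz2ne : z₂ ≠ 0 := by intro h; rw [h] at hz2; simp at hz2
  have hz3ne : z₃ ≠ 0 := by intro h; rw [h] at hz3; simp at hz3
  have h12' : z₁ - z₂ ≠ 0 := sub_ne_zero.mpr h12
  have h13' : z₁ - z₃ ≠ 0 := sub_ne_zero.mpr h13
  have h23' : z₂ - z₃ ≠ 0 := sub_ne_zero.mpr h23
  have h21' : z₂ - z₁ ≠ 0 := sub_ne_zero.mpr (Ne.symm h12)
  have h31' : z₃ - z₁ ≠ 0 := sub_ne_zero.mpr (Ne.symm h13)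
  have h32' : z₃ - z₂ ≠ 0 := sub_ne_zero.mpr (Ne.symm h23)
  -- conjugates of unit circle points
  have hn1 : Complex.normSq z₁ = 1 := by rw [Complex.normSq_eq_norm_sq, hz1]; norm_num
  have hn2 : Complex.normSq z₂ = 1 := by rw [Complex.normSq_eq_norm_sq, hz2]; norm_num
  have hn3 : Complex.normSq z₃ = 1 := by rw [Complex.normSq_eq_norm_sq, hz3]; norm_num
  have hu1 : z₁ * (starRingEnd ℂ) z₁ = 1 := by rw [Complex.mul_conj, hn1]; norm_num
  have hu2 : z₂ * (starRingEnd ℂ) z₂ = 1 := by rw [Complex.mul_conj, hn2]; norm_num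
  have hu3 : z₃ * (starRingEnd ℂ) z₃ = 1 := by rw [Complex.mul_conj, hn3]; norm_num
  -- coefficient relations
  have hL : lam = z₁ * z₂ * z₃ := by linear_combination -(hP 0)
  have hS' : z₁*z₂*z₃*(A+B) = (z₁*z₂ + z₁*z₃ + z₂*z₃) - a*b := by
    linear_combination (1/2 : ℂ) * (hP 1) - (1/2 : ℂ) * (hP (-1)) + (A+B) * (hP 0)
  have hQ' : z₁*z₂*z₃*(A*B) = (z₁ + z₂ + z₃) - a - b := by
    linear_combination (1 + A*B) * (hP 0) - (1/2 : ℂ) * (hP 1) - (1/2 : ℂ) * (hP (-1))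
  -- evaluations at a and b
  have hea : (z₁-a)*(z₂-a)*(z₃-a) = lam*(1-a*A)*(1-a*B) := by linear_combination hP a
  have heb : (z₁-b)*(z₂-b)*(z₃-b) = lam*(1-A*b)*(1-b*B) := by linear_combination hP b
  -- the contact point
  have hv : (z₃-z₁)*(z₃-z₂) ≠ 0 := mul_ne_zero h31' h32'
  have hm12 : m₁ + m₂ = ((z₃-z₁)*(z₃-z₂) - (z₃-a)*(z₃-b)) / ((z₃-z₁)*(z₃-z₂)) := by
    rw [hm1, hm2]; field_simp; ring
  have hwne : (z₃-z₁)*(z₃-z₂) - (z₃-a)*(z₃-b) ≠ 0 := by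
    intro h; apply hsum; rw [hm12, h, zero_div]
  have hmv : (m₁ + m₂) * ((z₃-z₁)*(z₃-z₂)) = (z₃-z₁)*(z₃-z₂) - (z₃-a)*(z₃-b) := by
    rw [hm12]; exact div_mul_cancel₀ _ hv
  have hz3' : ζ₃ * (m₁ + m₂) = m₁ * z₂ + m₂ * z₁ := by
    rw [hζ]; exact div_mul_cancel₀ _ hsum
  have key_a : (ζ₃ - a) * ((z₃-z₁)*(z₃-z₂) - (z₃-a)*(z₃-b)) = (z₁-a)*(z₂-a)*(b-z₃) := by
    calc (ζ₃ - a) * ((z₃-z₁)*(z₃-z₂) - (z₃-a)*(z₃-b))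
        = (ζ₃*(m₁+m₂) - a*(m₁+m₂)) * ((z₃-z₁)*(z₃-z₂)) := by rw [← hmv]; ring
    _ = (m₁*z₂ + m₂*z₁ - a*(m₁+m₂)) * ((z₃-z₁)*(z₃-z₂)) := by rw [hz3']
    _ = (z₁-a)*(z₂-a)*(b-z₃) := by rw [hm1, hm2]; field_simp; ring
  have key_b : (ζ₃ - b) * ((z₃-z₁)*(z₃-z₂) - (z₃-a)*(z₃-b)) = (z₁-b)*(z₂-b)*(a-z₃) := by
    calc (ζ₃ - b) * ((z₃-z₁)*(z₃-z₂) - (z₃-a)*(z₃-b))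
        = (ζ₃*(m₁+m₂) - b*(m₁+m₂)) * ((z₃-z₁)*(z₃-z₂)) := by rw [← hmv]; ring
    _ = (m₁*z₂ + m₂*z₁ - b*(m₁+m₂)) * ((z₃-z₁)*(z₃-z₂)) := by rw [hz3']
    _ = (z₁-b)*(z₂-b)*(a-z₃) := by rw [hm1, hm2]; field_simp; ring
  -- product formula
  have hXY : ((z₁-a)*(z₂-a)*(b-z₃)) * ((z₁-b)*(z₂-b)*(a-z₃))
      = (lam*(1-a*A)*(1-a*B)) * (lam*(1-A*b)*(1-b*B)) := by
    linear_combination ((z₁-b)*(z₂-b)*(z₃-b)) * hea + (lam*(1-a*A)*(1-a*B)) * heb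
  -- the main polynomial identity (certificate computed offline)
  have hE : (z₁*z₂*z₃) * (((z₁-a)*(1-A*z₁))*((z₂-a)*(1-A*z₂))*((z₃-b)*(1-B*z₃))*z₃
        + ((z₁-b)*(1-B*z₁))*((z₂-b)*(1-B*z₂))*((z₃-a)*(1-A*z₃))*z₃)
      = (z₁*z₂*z₃) * (2*(1-a*A)*(b*B-1)*((1-A*b)*(1-a*B))*(z₁*z₂*z₃^2)
        + ((1-A*b)*(1-a*B))*(((z₃-z₁)*(z₃-z₂)-(z₃-a)*(z₃-b))*((z₁-z₃)*(z₂-z₃)-z₁*z₂*(1-A*z₃)*(1-B*z₃)))) := by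
    linear_combination ((-a^3*b^3 + z₃*a^2*b^3 + z₃*a^3*b^2 - z₃*a^3*b^3*A + z₃^2*a^2*b^2 - z₃^2*a^2*b^3*A - z₃^2*a^3*b^2*A + z₂*z₃*a^2*b^2 - z₂*z₃^2*a*b^2 - z₂*z₃^2*a^2*b + 2*z₂*z₃^2*a^2*b^2*A - z₂*z₃^3*a*b + z₂*z₃^3*a*b^2*A + z₂*z₃^3*a^2*b*A - z₂^2*z₃^3*a*b*A + z₁*z₃*a^2*b^2 - z₁*z₃^2*a*b^2 - z₁*z₃^2*a^2*b + 2*z₁*z₃^2*a^2*b^2*A - z₁*z₃^3*a*b + z₁*z₃^3*a*b^2*A + z₁*z₃^3*a^2*b*A + 2*z₁*z₂*a^2*b^2 - 2*z₁*z₂*z₃*a*b^2 - 2*z₁*z₂*z₃*a^2*b - z₁*z₂*z₃^2*a*b + z₁*z₂*z₃^2*a*b^2*A + z₁*z₂*z₃^2*a^2*b*A - z₁*z₂*z₃^2*a^2*b^2*A^2 + z₁*z₂*z₃^3*b + z₁*z₂*z₃^3*a - 2*z₁*z₂*z₃^3*a*b*A - z₁*z₂*z₃^3*a*b^2*A^2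 - z₁*z₂*z₃^3*a^2*b*A^2 - z₁*z₂^2*z₃*a*b + z₁*z₂^2*z₃^2*b + z₁*z₂^2*z₃^2*a + z₁*z₂^2*z₃^3*a*b*A^2 - z₁^2*z₃^3*a*b*A - z₁^2*z₂*z₃*a*b + z₁^2*z₂*z₃^2*b + z₁^2*z₂*z₃^2*a + z₁^2*z₂*z₃^3*a*b*A^2 - z₁^2*z₂^2*a*b + z₁^2*z₂^2*z₃*b + z₁^2*z₂^2*z₃*a + z₁^2*z₂^2*z₃*a*b*A - 2*z₁^2*z₂^2*z₃^2 - z₁^2*z₂^2*z₃^2*a*b*A^2)) * hQ' + ((a^2*b^3 + a^3*b^2 - z₃*a*b^3 - 3*z₃*a^2*b^2 + z₃*a^2*b^3*A - z₃*a^3*b + z₃*a^3*b^2*A + z₃^2*a*b^3*A + z₃^2*a^2*b^2*A + z₃^2*a^3*b*A + z₃^3*a*b - z₃^3*a*b^2*A - z₃^3*a^2*b*A - z₂*a^2*b^2 + z₂*z₃*a*b^2 + z₂*z₃*a^2*b - z₂*z₃*a^2*b^2*A + z₂*z₃^2*a*b - 2*z₂*z₃^2*a*b^2*A - 2*z₂*z₃^2*a^2*b*A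 + z₂*z₃^3*a*b*A + z₂^2*z₃^2*a*b*A - z₁*a^2*b^2 + z₁*z₃*a*b^2 + z₁*z₃*a^2*b - z₁*z₃*a^2*b^2*A + z₁*z₃^2*a*b - 2*z₁*z₃^2*a*b^2*A - 2*z₁*z₃^2*a^2*b*A + z₁*z₃^3*a*b*A - z₁*z₂*a*b^2 - z₁*z₂*a^2*b + z₁*z₂*z₃*b^2 + 3*z₁*z₂*z₃*a*b - z₁*z₂*z₃*a*b^2*B + z₁*z₂*z₃*a^2 - z₁*z₂*z₃*a^2*b*B + z₁*z₂*z₃*a^2*b^2*A*B - 2*z₁*z₂*z₃^2*b + z₁*z₂*z₃^2*b^2*B + z₁*z₂*z₃^2*b^2*A - 2*z₁*z₂*z₃^2*a + 3*z₁*z₂*z₃^2*a*b*B + 4*z₁*z₂*z₃^2*a*b*A - 2*z₁*z₂*z₃^2*a*b^2*A*B + z₁*z₂*z₃^2*a^2*B + z₁*z₂*z₃^2*a^2*A - 2*z₁*z₂*z₃^2*a^2*b*A*B + z₁*z₂*z₃^2*a^2*b^2*A^2*B - z₁*z₂*z₃^3 - z₁*z₂*z₃^3*b^2*A*B - z₁*z₂*z₃^3*a*b*A*B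 + z₁*z₂*z₃^3*a*b^2*A^2*B - z₁*z₂*z₃^3*a^2*A*B + z₁*z₂*z₃^3*a^2*b*A^2*B + z₁*z₂^2*a*b - z₁*z₂^2*z₃*b - z₁*z₂^2*z₃*a + z₁*z₂^2*z₃*a*b*B + z₁*z₂^2*z₃^2 - z₁*z₂^2*z₃^2*b*B - z₁*z₂^2*z₃^2*b*A - z₁*z₂^2*z₃^2*a*B - z₁*z₂^2*z₃^2*a*A + z₁*z₂^2*z₃^3*b*A*B + z₁*z₂^2*z₃^3*a*A*B - z₁*z₂^2*z₃^3*a*b*A^2*B + z₁^2*z₃^2*a*b*A + z₁^2*z₂*a*b - z₁^2*z₂*z₃*b - z₁^2*z₂*z₃*a + z₁^2*z₂*z₃*a*b*B + z₁^2*z₂*z₃^2 - z₁^2*z₂*z₃^2*b*B - z₁^2*z₂*z₃^2*b*A - z₁^2*z₂*z₃^2*a*B - z₁^2*z₂*z₃^2*a*A + z₁^2*z₂*z₃^3*b*A*B + z₁^2*z₂*z₃^3*a*A*B - z₁^2*z₂*z₃^3*a*b*A^2*B - z₁^2*z₂^2*z₃*a*b*A*B + z₁^2*z₂^2*z₃^2*B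 + z₁^2*z₂^2*z₃^2*A + z₁^2*z₂^2*z₃^2*a*b*A^2*B - z₁^2*z₂^2*z₃^3*A*B)) * hS'
  -- bridge identities with conjugation
  have hX2 : ((z₁-a)*(z₂-a)*(b-z₃)) * (starRingEnd ℂ) ((z₁-a)*(z₂-a)*(b-z₃)) * (z₁*z₂*z₃^2)
      = ((z₁-a)*(1-A*z₁))*((z₂-a)*(1-A*z₂))*((z₃-b)*(1-B*z₃))*z₃ := by
    simp only [map_mul, map_sub]
    rw [← hA, ← hB]
    linear_combination ((z₁-a)*((z₂-a)*((starRingEnd ℂ) z₂-A)*z₂)*((b-z₃)*(B-(starRingEnd ℂ) z₃)*z₃)*z₃) * hu1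
      + (((z₁-a)*(1-A*z₁))*(z₂-a)*((b-z₃)*(B-(starRingEnd ℂ) z₃)*z₃)*z₃) * hu2
      - (((z₁-a)*(1-A*z₁))*((z₂-a)*(1-A*z₂))*(b-z₃)*z₃) * hu3
  have hY2 : ((z₁-b)*(z₂-b)*(a-z₃)) * (starRingEnd ℂ) ((z₁-b)*(z₂-b)*(a-z₃)) * (z₁*z₂*z₃^2)
      = ((z₁-b)*(1-B*z₁))*((z₂-b)*(1-B*z₂))*((z₃-a)*(1-A*z₃))*z₃ := by
    simp only [map_mul, map_sub]
    rw [← hA, ← hB]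
    linear_combination ((z₁-b)*((z₂-b)*((starRingEnd ℂ) z₂-B)*z₂)*((a-z₃)*(A-(starRingEnd ℂ) z₃)*z₃)*z₃) * hu1
      + (((z₁-b)*(1-B*z₁))*(z₂-b)*((a-z₃)*(A-(starRingEnd ℂ) z₃)*z₃)*z₃) * hu2
      - (((z₁-b)*(1-B*z₁))*((z₂-b)*(1-B*z₂))*(a-z₃)*z₃) * hu3
  have hW2c : (starRingEnd ℂ) ((z₃-z₁)*(z₃-z₂)-(z₃-a)*(z₃-b)) * (z₁*z₂*z₃^2)
      = (z₁-z₃)*(z₂-z₃)-z₁*z₂*(1-A*z₃)*(1-B*z₃) := by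
    simp only [map_mul, map_sub]
    rw [← hA, ← hB]
    linear_combination (z₁*(((starRingEnd ℂ) z₃-(starRingEnd ℂ) z₂)*z₂*z₃) + (z₁-z₃)*z₂
        - z₁*z₂*(((starRingEnd ℂ) z₃*z₃ - B*z₃)+1-A*z₃)) * hu3
      - (z₃*(((starRingEnd ℂ) z₃-(starRingEnd ℂ) z₂)*z₂*z₃)) * hu1
      - ((z₁-z₃)*z₃) * hu2
  have hW2 : ((z₃-z₁)*(z₃-z₂)-(z₃-a)*(z₃-b)) * (starRingEnd ℂ) ((z₃-z₁)*(z₃-z₂)-(z₃-a)*(z₃-b)) * (z₁*z₂*z₃^2)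
      = ((z₃-z₁)*(z₃-z₂)-(z₃-a)*(z₃-b)) * ((z₁-z₃)*(z₂-z₃)-z₁*z₂*(1-A*z₃)*(1-B*z₃)) := by
    linear_combination ((z₃-z₁)*(z₃-z₂)-(z₃-a)*(z₃-b)) * hW2c
  have hMne : z₁*z₂*z₃*(z₁*z₂*z₃^2) ≠ 0 := by
    apply mul_ne_zero (mul_ne_zero (mul_ne_zero hz1ne hz2ne) hz3ne)
    exact mul_ne_zero (mul_ne_zero hz1ne hz2ne) (pow_ne_zero 2 hz3ne)
  have hmain : ((z₁-a)*(z₂-a)*(b-z₃)) * (starRingEnd ℂ) ((z₁-a)*(z₂-a)*(b-z₃))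
        + ((z₁-b)*(z₂-b)*(a-z₃)) * (starRingEnd ℂ) ((z₁-b)*(z₂-b)*(a-z₃))
      = 2*(1-a*A)*(b*B-1)*((1-A*b)*(1-a*B))
        + ((1-A*b)*(1-a*B))*(((z₃-z₁)*(z₃-z₂)-(z₃-a)*(z₃-b))
            * (starRingEnd ℂ) ((z₃-z₁)*(z₃-z₂)-(z₃-a)*(z₃-b))) := by
    apply mul_left_cancel₀ hMne
    linear_combination hE + (z₁*z₂*z₃) * hX2 + (z₁*z₂*z₃) * hY2
      - ((1-A*b)*(1-a*B))*(z₁*z₂*z₃) * hW2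
  -- fold names
  set X : ℂ := (z₁-a)*(z₂-a)*(b-z₃) with hX
  set Y : ℂ := (z₁-b)*(z₂-b)*(a-z₃) with hY
  set w : ℂ := (z₃-z₁)*(z₃-z₂)-(z₃-a)*(z₃-b) with hw
  -- cast helpers
  have hna : (1:ℂ) - a*A = 1 - ((Complex.normSq a : ℝ) : ℂ) := by
    rw [hA]; linear_combination -Complex.mul_conj a
  have hnb : b*B - 1 = ((Complex.normSq b : ℝ) : ℂ) - 1 := by
    rw [hB]; linear_combination Complex.mul_conj b
  have hKconj : (1:ℂ) - a*B = (starRingEnd ℂ) (1 - A*b) := by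
    rw [hA, hB]; simp [map_sub, map_mul]
  have hK : ((1:ℂ)-A*b)*((1:ℂ)-a*B) = ((Complex.normSq (1-A*b) : ℝ) : ℂ) := by
    rw [hKconj]; exact Complex.mul_conj _
  -- nonnegativity facts
  have hna' : 0 ≤ 1 - Complex.normSq a := by
    rw [Complex.normSq_eq_norm_sq]
    nlinarith [norm_nonneg a]
  have hnb' : 0 ≤ Complex.normSq b - 1 := by
    rw [Complex.normSq_eq_norm_sq]
    nlinarith [norm_nonneg b]
  -- identity (ii) over the reals
  have hreal2 : Complex.normSq X + Complex.normSq Y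
      = 2*(1 - Complex.normSq a)*(Complex.normSq b - 1)*Complex.normSq (1-A*b)
        + Complex.normSq (1-A*b) * Complex.normSq w := by
    have h2 : ((Complex.normSq X + Complex.normSq Y : ℝ) : ℂ)
        = ((2*(1 - Complex.normSq a)*(Complex.normSq b - 1)*Complex.normSq (1-A*b)
        + Complex.normSq (1-A*b) * Complex.normSq w : ℝ) : ℂ) := by
      push_cast
      linear_combination hmain - Complex.mul_conj X - Complex.mul_conj Y
        + 2*(b*B-1)*((1-A*b)*(1-a*B))*hna
        + 2*(1 - ((Complex.normSq a : ℝ) : ℂ))*((1-A*b)*(1-a*B))*hnb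
        + (2*(1 - ((Complex.normSq a : ℝ) : ℂ))*(((Complex.normSq b : ℝ) : ℂ) - 1)
            + w*(starRingEnd ℂ) w)*hK
        + ((Complex.normSq (1-A*b) : ℝ) : ℂ)*Complex.mul_conj w
    exact_mod_cast h2
  -- abs values
  set p : ℝ := ‖X‖ with hp
  set q : ℝ := ‖Y‖ with hq
  set rt : ℝ := ‖1-A*b‖ with hrt
  set rw' : ℝ := ‖w‖ with hrw
  have habs_na : ‖(1:ℂ) - a*A‖ = 1 - Complex.normSq a := by
    have h' : (1:ℂ) - a*A = ((1 - Complex.normSq a : ℝ) : ℂ) := by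
      rw [hna]; push_cast; ring
    rw [h', Complex.norm_real, Real.norm_eq_abs, _root_.abs_of_nonneg hna']
  have habs_nb : ‖(1:ℂ) - b*B‖ = Complex.normSq b - 1 := by
    have h' : (1:ℂ) - b*B = ((1 - Complex.normSq b : ℝ) : ℂ) := by
      rw [sub_eq_iff_eq_add] at hnb ⊢
      rw [← sub_eq_iff_eq_add'] at hnb
      push_cast
      linear_combination -hnb
    rw [h', Complex.norm_real, Real.norm_eq_abs, _root_.abs_of_nonpos (by linarith)]
    ring
  have habs_ab : ‖(1:ℂ) - a*B‖ = rt := by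
    rw [hKconj, Complex.norm_conj]
  -- identity (i) over the reals
  have hpq : p * q = (1 - Complex.normSq a)*(Complex.normSq b - 1)*rt^2 := by
    calc p * q = ‖X*Y‖ := by rw [hp, hq, ← norm_mul]
    _ = ‖(lam*(1-a*A)*(1-a*B)) * (lam*(1-A*b)*(1-b*B))‖ := by rw [hXY]
    _ = ‖lam‖ * ‖(1:ℂ)-a*A‖ * ‖(1:ℂ)-a*B‖
        * (‖lam‖ * ‖(1:ℂ)-A*b‖ * ‖(1:ℂ)-b*B‖) := by
        simp only [norm_mul]
    _ = (1 - Complex.normSq a)*(Complex.normSq b - 1)*rt^2 := by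
        rw [hlam, habs_na, habs_nb, habs_ab, hrt]; ring
  have hdsq : (p - q)^2 = (rt * rw')^2 := by
    have h1 : p^2 = Complex.normSq X := by rw [hp, Complex.sq_norm]
    have h2 : q^2 = Complex.normSq Y := by rw [hq, Complex.sq_norm]
    have h3 : rt^2 = Complex.normSq (1-A*b) := by rw [hrt, Complex.sq_norm]
    have h4 : rw'^2 = Complex.normSq w := by rw [hrw, Complex.sq_norm]
    linear_combination h1 + h2 + hreal2 - 2*hpq
      + (-2*(1 - Complex.normSq a)*(Complex.normSq b - 1) - rw'^2)*h3
      - Complex.normSq (1-A*b)*h4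
  have hrtnn : 0 ≤ rt := norm_nonneg _
  have hrwnn : 0 ≤ rw' := norm_nonneg _
  have hdabs : |p - q| = rt * rw' := by
    rw [← Real.sqrt_sq_eq_abs, hdsq, Real.sqrt_sq (mul_nonneg hrtnn hrwnn)]
  -- finish
  have hrwne : rw' ≠ 0 := by
    rw [hrw]
    simpa using hwne
  have habs_a : ‖ζ₃ - a‖ * rw' = p := by
    rw [hrw, hp, ← norm_mul, key_a]
  have habs_b : ‖ζ₃ - b‖ * rw' = q := by
    rw [hrw, hq, ← norm_mul, key_b]
  have hrwpos : 0 < rw' := lt_of_le_of_ne hrwnn (Ne.symm hrwne)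
  have hga : ‖ζ₃ - a‖ = p / rw' := by
    rw [eq_div_iff hrwne]; exact habs_a
  have hgb : ‖ζ₃ - b‖ = q / rw' := by
    rw [eq_div_iff hrwne]; exact habs_b
  rw [hga, hgb, div_sub_div_same, _root_.abs_div, _root_.abs_of_pos hrwpos, hdabs]
  rw [mul_div_assoc, div_self hrwne, mul_one]
end

section
/- Under the stated setup, if additionally a ≠ z₃ and b ≠ z₃, then the reciprocal of the residue m₃ satisfies the real formula 1/m₃ = 1 + (1 − |a|²)/|z₃ − a|² + (1 − |b|²)/|z₃ − b|², i.e. the complex number (z₃ − z₁)(z₃ − z₂)/((z₃ − a)(z₃ − b)) equals the real number 1 + (1 − |a|²)/|z₃ − a|² + (1 − |b|²)/|z₃ − b|². -/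
open Complex

theorem stmt_3 (a b lam z₁ z₂ z₃ : ℂ)
    (hlam : ‖lam‖ = 1)
    (h12 : z₁ ≠ z₂) (h13 : z₁ ≠ z₃) (h23 : z₂ ≠ z₃)
    (hz1 : ‖z₁‖ = 1) (hz2 : ‖z₂‖ = 1) (hz3 : ‖z₃‖ = 1)
    (hP : ∀ z : ℂ,
      z * (z - a) * (z - b) - lam * (1 - (starRingEnd ℂ) a * z) * (1 - (starRingEnd ℂ) b * z)
        = (z - z₁) * (z - z₂) * (z - z₃))
    (ha3 : a ≠ z₃) (hb3 : b ≠ z₃) :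
    (z₃ - z₁) * (z₃ - z₂) / ((z₃ - a) * (z₃ - b))
      = ((1 + (1 - ‖a‖ ^ 2) / ‖z₃ - a‖ ^ 2
            + (1 - ‖b‖ ^ 2) / ‖z₃ - b‖ ^ 2 : ℝ) : ℂ) := by
  have hz3ne : z₃ ≠ 0 := by
    intro h; rw [h] at hz3; simp at hz3
  have hA : z₃ - a ≠ 0 := sub_ne_zero.mpr ha3.symm
  have hB : z₃ - b ≠ 0 := sub_ne_zero.mpr hb3.symm
  have hA' : (starRingEnd ℂ) (z₃ - a) ≠ 0 := star_ne_zero.mpr hA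
  have hB' : (starRingEnd ℂ) (z₃ - b) ≠ 0 := star_ne_zero.mpr hB
  have F0 : z₃ * (starRingEnd ℂ) z₃ = 1 := by
    rw [Complex.mul_conj]; norm_cast
    rw [Complex.normSq_eq_norm_sq, hz3]; norm_num
  have hE1 : (z₃ - a) * (z₃ - b)
      = lam * z₃ * ((starRingEnd ℂ) (z₃ - a) * (starRingEnd ℂ) (z₃ - b)) := by
    apply mul_left_cancel₀ hz3ne
    have h3 := hP z₃
    simp only [map_sub] at *
    linear_combination h3 + lam * (z₃ * (starRingEnd ℂ) z₃ + 1 - ((starRingEnd ℂ) a + (starRingEnd ℂ) b) * z₃) * F0 + (2 * lam * ((starRingEnd ℂ) a + (starRingEnd ℂ) b) * z₃ - 2 * lam * z₃ * (starRingEnd ℂ) z₃ - 2 * lam) * F0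
  have hC0 : lam = z₁ * z₂ * z₃ := by
    have h0 := hP 0
    linear_combination -h0
  have hp12 : z₁ * z₂ = lam * (starRingEnd ℂ) z₃ := by
    linear_combination -((starRingEnd ℂ) z₃) * hC0 - z₁ * z₂ * F0
  have hs12 : z₁ + z₂ + z₃ = a + b + lam * ((starRingEnd ℂ) a * (starRingEnd ℂ) b) := by
    have h1 := hP 1
    have hm1 := hP (-1)
    have h0 := hP 0
    linear_combination (h1 + hm1) / 2 - h0
  have key : (z₃ - z₁) * (z₃ - z₂) * ((starRingEnd ℂ) (z₃ - a) * (starRingEnd ℂ) (z₃ - b))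
      = (z₃ - a) * (z₃ - b) * ((starRingEnd ℂ) (z₃ - a) * (starRingEnd ℂ) (z₃ - b))
        + (1 - a * (starRingEnd ℂ) a) * ((z₃ - b) * (starRingEnd ℂ) (z₃ - b))
        + (1 - b * (starRingEnd ℂ) b) * ((z₃ - a) * (starRingEnd ℂ) (z₃ - a)) := by
    simp only [map_sub] at hE1 ⊢
    set w := (starRingEnd ℂ) z₃ with hw
    set ap := (starRingEnd ℂ) a with hap
    set bp := (starRingEnd ℂ) b with hbp
    linear_combination
      (2 * z₃ * w - lam * w ^ 3 - bp * z₃ + bp * lam * w ^ 2 - ap * z₃ + ap * lam * w ^ 2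
        - ap * bp * lam * w - b * w + b * bp - a * w + a * ap) * F0
      + (ap * bp - w ^ 2) * hE1
      + ((w - ap) * (w - bp)) * hp12
      + (-(z₃ * (w - ap) * (w - bp))) * hs12
  have habs1 : ((‖z₃ - a‖ : ℝ) : ℂ) ^ 2 = (z₃ - a) * (starRingEnd ℂ) (z₃ - a) := by
    rw [← Complex.ofReal_pow, Complex.sq_norm]; exact (Complex.mul_conj _).symm
  have habs2 : ((‖z₃ - b‖ : ℝ) : ℂ) ^ 2 = (z₃ - b) * (starRingEnd ℂ) (z₃ - b) := by
    rw [← Complex.ofReal_pow, Complex.sq_norm]; exact (Complex.mul_conj _).symm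
  have habsa : ((‖a‖ : ℝ) : ℂ) ^ 2 = a * (starRingEnd ℂ) a := by
    rw [← Complex.ofReal_pow, Complex.sq_norm]; exact (Complex.mul_conj _).symm
  have habsb : ((‖b‖ : ℝ) : ℂ) ^ 2 = b * (starRingEnd ℂ) b := by
    rw [← Complex.ofReal_pow, Complex.sq_norm]; exact (Complex.mul_conj _).symm
  have hA'' : (starRingEnd ℂ) z₃ - (starRingEnd ℂ) a ≠ 0 := by rw [← map_sub]; exact hA'
  have hB'' : (starRingEnd ℂ) z₃ - (starRingEnd ℂ) b ≠ 0 := by rw [← map_sub]; exact hB'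
  push_cast
  rw [habs1, habs2, habsa, habsb]
  simp only [map_sub] at key ⊢
  field_simp
  linear_combination key
end

section
/- Under the stated setup, the residue m₃ = (z₃ − a)(z₃ − b)/((z₃ − z₁)(z₃ − z₂)) is a real number, i.e. its imaginary part is zero. -/
open Complex

theorem stmt_4 (a b lam z₁ z₂ z₃ : ℂ)
    (hlam : ‖lam‖ = 1)
    (h12 : z₁ ≠ z₂) (h13 : z₁ ≠ z₃) (h23 : z₂ ≠ z₃)
    (hz1 : ‖z₁‖ = 1) (hz2 : ‖z₂‖ = 1) (hz3 : ‖z₃‖ = 1)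
    (hP : ∀ z : ℂ,
      z * (z - a) * (z - b) - lam * (1 - (starRingEnd ℂ) a * z) * (1 - (starRingEnd ℂ) b * z)
        = (z - z₁) * (z - z₂) * (z - z₃)) :
    ((z₃ - a) * (z₃ - b) / ((z₃ - z₁) * (z₃ - z₂))).im = 0 := by
  have hz1' : z₁ ≠ 0 := by intro h; simp [h] at hz1
  have hz2' : z₂ ≠ 0 := by intro h; simp [h] at hz2
  have hz3' : z₃ ≠ 0 := by intro h; simp [h] at hz3
  have c1 : (starRingEnd ℂ) z₁ = z₁⁻¹ := by
    apply eq_inv_of_mul_eq_one_left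
    rw [mul_comm, Complex.mul_conj]
    norm_cast
    rw [Complex.normSq_eq_norm_sq, hz1]; norm_num
  have c2 : (starRingEnd ℂ) z₂ = z₂⁻¹ := by
    apply eq_inv_of_mul_eq_one_left
    rw [mul_comm, Complex.mul_conj]
    norm_cast
    rw [Complex.normSq_eq_norm_sq, hz2]; norm_num
  have c3 : (starRingEnd ℂ) z₃ = z₃⁻¹ := by
    apply eq_inv_of_mul_eq_one_left
    rw [mul_comm, Complex.mul_conj]
    norm_cast
    rw [Complex.normSq_eq_norm_sq, hz3]; norm_num
  have e0 : lam = z₁ * z₂ * z₃ := by linear_combination -(hP 0)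
  have e1 : z₃ * (z₃ - a) * (z₃ - b)
      = lam * (1 - (starRingEnd ℂ) a * z₃) * (1 - (starRingEnd ℂ) b * z₃) := by
    linear_combination hP z₃
  have d1 : z₃ - z₁ ≠ 0 := sub_ne_zero.mpr (Ne.symm h13)
  have d2 : z₃ - z₂ ≠ 0 := sub_ne_zero.mpr (Ne.symm h23)
  rw [← Complex.conj_eq_iff_im]
  simp only [map_div₀, map_mul, map_sub, c1, c2, c3]
  have key : (z₃ - a) * (z₃ - b)
      = z₁ * z₂ * ((1 - (starRingEnd ℂ) a * z₃) * (1 - (starRingEnd ℂ) b * z₃)) :=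
    mul_left_cancel₀ hz3' (by
      linear_combination e1 + ((1 - (starRingEnd ℂ) a * z₃) * (1 - (starRingEnd ℂ) b * z₃)) * e0)
  rw [div_eq_div_iff]
  · field_simp
    linear_combination (-((z₃ - z₁) * (z₃ - z₂))) * key
  · apply mul_ne_zero <;> (rw [sub_ne_zero]; intro h)
    · exact d1 (by rw [inv_eq_iff_eq_inv.mp h.symm] at d1 ⊢; simpa using d1)
    · exact d2 (by rw [inv_eq_iff_eq_inv.mp h.symm] at d2 ⊢; simpa using d2)
  · exact mul_ne_zero d1 d2
end

section
/- Under the stated setup, if additionally a is distinct from z₁, z₂ and z₃ and m₃ ≠ 1, then ζ₃ − a = (m₃/(1 − m₃)) · (a − z₁)(a − z₂)/(a − z₃). -/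
open Complex

theorem stmt_6 (a b lam z₁ z₂ z₃ m₁ m₂ m₃ ζ₃ : ℂ)
    (hlam : ‖lam‖ = 1)
    (h12 : z₁ ≠ z₂) (h13 : z₁ ≠ z₃) (h23 : z₂ ≠ z₃)
    (hz1 : ‖z₁‖ = 1) (hz2 : ‖z₂‖ = 1) (hz3 : ‖z₃‖ = 1)
    (hP : ∀ z : ℂ,
      z * (z - a) * (z - b) - lam * (1 - (starRingEnd ℂ) a * z) * (1 - (starRingEnd ℂ) b * z)
        = (z - z₁) * (z - z₂) * (z - z₃))
    (hm1 : m₁ = (z₁ - a) * (z₁ - b) / ((z₁ - z₂) * (z₁ - z₃)))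
    (hm2 : m₂ = (z₂ - a) * (z₂ - b) / ((z₂ - z₁) * (z₂ - z₃)))
    (hm3 : m₃ = (z₃ - a) * (z₃ - b) / ((z₃ - z₁) * (z₃ - z₂)))
    (hsum : m₁ + m₂ ≠ 0)
    (hζ : ζ₃ = (m₁ * z₂ + m₂ * z₁) / (m₁ + m₂))
    (ha1 : a ≠ z₁) (ha2 : a ≠ z₂) (ha3 : a ≠ z₃)
    (hm3ne : m₃ ≠ 1) :
    ζ₃ - a = m₃ / (1 - m₃) * ((a - z₁) * (a - z₂) / (a - z₃)) := by
  have d12 : z₁ - z₂ ≠ 0 := sub_ne_zero.mpr h12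
  have d13 : z₁ - z₃ ≠ 0 := sub_ne_zero.mpr h13
  have d23 : z₂ - z₃ ≠ 0 := sub_ne_zero.mpr h23
  have d21 : z₂ - z₁ ≠ 0 := sub_ne_zero.mpr h12.symm
  have d31 : z₃ - z₁ ≠ 0 := sub_ne_zero.mpr h13.symm
  have d32 : z₃ - z₂ ≠ 0 := sub_ne_zero.mpr h23.symm
  have da3 : a - z₃ ≠ 0 := sub_ne_zero.mpr ha3
  have h1m3 : (1 : ℂ) - m₃ ≠ 0 := sub_ne_zero.mpr (Ne.symm hm3ne)
  have key1 : m₁ + m₂ = 1 - m₃ := by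
    rw [hm1, hm2, hm3]; field_simp; ring
  have key2 : m₁ * (a - z₂) * (a - z₃) + m₂ * (a - z₁) * (a - z₃)
      + m₃ * (a - z₁) * (a - z₂) = 0 := by
    rw [hm1, hm2, hm3]; field_simp; ring
  rw [hζ]
  field_simp
  linear_combination (a * (a - z₃) * (1 - m₃) - m₃ * (a - z₁) * (a - z₂) + a * (z₃ - a) * (1 - m₃)) * key1
    - (1 - m₃) * key2
end

section
/- Under the stated setup, if additionally b is distinct from z₁, z₂ and z₃ and m₃ ≠ 1, then ζ₃ − b = (m₃/(1 − m₃)) · (b − z₁)(b − z₂)/(b − z₃). -/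
open Complex

theorem stmt_7 (a b lam z₁ z₂ z₃ m₁ m₂ m₃ ζ₃ : ℂ)
    (hlam : ‖lam‖ = 1)
    (h12 : z₁ ≠ z₂) (h13 : z₁ ≠ z₃) (h23 : z₂ ≠ z₃)
    (hz1 : ‖z₁‖ = 1) (hz2 : ‖z₂‖ = 1) (hz3 : ‖z₃‖ = 1)
    (hP : ∀ z : ℂ,
      z * (z - a) * (z - b) - lam * (1 - (starRingEnd ℂ) a * z) * (1 - (starRingEnd ℂ) b * z)
        = (z - z₁) * (z - z₂) * (z - z₃))
    (hm1 : m₁ = (z₁ - a) * (z₁ - b) / ((z₁ - z₂) * (z₁ - z₃)))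
    (hm2 : m₂ = (z₂ - a) * (z₂ - b) / ((z₂ - z₁) * (z₂ - z₃)))
    (hm3 : m₃ = (z₃ - a) * (z₃ - b) / ((z₃ - z₁) * (z₃ - z₂)))
    (hsum : m₁ + m₂ ≠ 0)
    (hζ : ζ₃ = (m₁ * z₂ + m₂ * z₁) / (m₁ + m₂))
    (hb1 : b ≠ z₁) (hb2 : b ≠ z₂) (hb3 : b ≠ z₃)
    (hm3ne : m₃ ≠ 1) :
    ζ₃ - b = m₃ / (1 - m₃) * ((b - z₁) * (b - z₂) / (b - z₃)) := by
  have d12 : z₁ - z₂ ≠ 0 := sub_ne_zero.mpr h12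
  have d13 : z₁ - z₃ ≠ 0 := sub_ne_zero.mpr h13
  have d21 : z₂ - z₁ ≠ 0 := sub_ne_zero.mpr h12.symm
  have d23 : z₂ - z₃ ≠ 0 := sub_ne_zero.mpr h23
  have d31 : z₃ - z₁ ≠ 0 := sub_ne_zero.mpr h13.symm
  have d32 : z₃ - z₂ ≠ 0 := sub_ne_zero.mpr h23.symm
  have db3 : b - z₃ ≠ 0 := sub_ne_zero.mpr hb3
  have h1 : m₁ + m₂ + m₃ = 1 := by
    rw [hm1, hm2, hm3]; field_simp; ring
  have h2 : (m₁ * (z₂ - b) + m₂ * (z₁ - b)) * (b - z₃) = m₃ * ((b - z₁) * (b - z₂)) := by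
    rw [hm1, hm2, hm3]; field_simp; ring
  have hsum' : m₁ + m₂ = 1 - m₃ := by linear_combination h1
  have h1m3 : 1 - m₃ ≠ 0 := hsum' ▸ hsum
  have key : (m₁ * z₂ + m₂ * z₁ - b * (1 - m₃)) * (b - z₃)
      = m₃ * ((b - z₁) * (b - z₂)) := by
    linear_combination h2 + b * (b - z₃) * h1
  have step : ζ₃ - b = (m₁ * z₂ + m₂ * z₁ - b * (1 - m₃)) / (1 - m₃) := by
    rw [hζ, hsum']; field_simp
  rw [step, div_mul_div_comm, div_eq_div_iff h1m3 (mul_ne_zero h1m3 db3)]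
  linear_combination (1 - m₃) * key
end

section
/- Under the stated setup, if additionally a is distinct from z₁, z₂ and z₃ and m₃ ≠ 1, then ζ₃ − a = (m₃/(1 − m₃)) · ( −λ(1 − |a|²)(1 − conj(b)·a)/(a − z₃)² ). -/
open Complex

theorem stmt_8 (a b lam z₁ z₂ z₃ m₁ m₂ m₃ ζ₃ : ℂ)
    (hlam : ‖lam‖ = 1)
    (h12 : z₁ ≠ z₂) (h13 : z₁ ≠ z₃) (h23 : z₂ ≠ z₃)
    (hz1 : ‖z₁‖ = 1) (hz2 : ‖z₂‖ = 1) (hz3 : ‖z₃‖ = 1)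
    (hP : ∀ z : ℂ,
      z * (z - a) * (z - b) - lam * (1 - (starRingEnd ℂ) a * z) * (1 - (starRingEnd ℂ) b * z)
        = (z - z₁) * (z - z₂) * (z - z₃))
    (hm1 : m₁ = (z₁ - a) * (z₁ - b) / ((z₁ - z₂) * (z₁ - z₃)))
    (hm2 : m₂ = (z₂ - a) * (z₂ - b) / ((z₂ - z₁) * (z₂ - z₃)))
    (hm3 : m₃ = (z₃ - a) * (z₃ - b) / ((z₃ - z₁) * (z₃ - z₂)))
    (hsum : m₁ + m₂ ≠ 0)
    (hζ : ζ₃ = (m₁ * z₂ + m₂ * z₁) / (m₁ + m₂))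
    (ha1 : a ≠ z₁) (ha2 : a ≠ z₂) (ha3 : a ≠ z₃)
    (hm3ne : m₃ ≠ 1) :
    ζ₃ - a = m₃ / (1 - m₃) * (-(lam * (1 - (‖a‖ : ℂ) ^ 2) * (1 - (starRingEnd ℂ) b * a)) / (a - z₃) ^ 2) := by
  have h12' : z₁ - z₂ ≠ 0 := sub_ne_zero.mpr h12
  have h13' : z₁ - z₃ ≠ 0 := sub_ne_zero.mpr h13
  have h23' : z₂ - z₃ ≠ 0 := sub_ne_zero.mpr h23
  have h21' : z₂ - z₁ ≠ 0 := sub_ne_zero.mpr (Ne.symm h12)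
  have h31' : z₃ - z₁ ≠ 0 := sub_ne_zero.mpr (Ne.symm h13)
  have h32' : z₃ - z₂ ≠ 0 := sub_ne_zero.mpr (Ne.symm h23)
  have ha3' : a - z₃ ≠ 0 := sub_ne_zero.mpr ha3
  have habs : ((‖a‖ : ℂ)) ^ 2 = (starRingEnd ℂ) a * a := by
    rw [← Complex.ofReal_pow, Complex.sq_norm, Complex.normSq_eq_conj_mul_self]
  have key : -(lam * (1 - (‖a‖ : ℂ) ^ 2) * (1 - (starRingEnd ℂ) b * a))
      = (a - z₁) * (a - z₂) * (a - z₃) := by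
    have := hP a
    rw [habs]
    linear_combination this
  have hsum3 : m₁ + m₂ + m₃ = 1 := by
    rw [hm1, hm2, hm3]
    field_simp
    ring
  have h1m3 : 1 - m₃ = m₁ + m₂ := by linear_combination -hsum3
  have hlin : (m₁ * (z₂ - a) + m₂ * (z₁ - a)) * (a - z₃) = m₃ * (a - z₁) * (a - z₂) := by
    rw [hm1, hm2, hm3]
    field_simp
    ring
  rw [hζ, key, h1m3]
  field_simp
  linear_combination hlin
end

section
/- Under the stated setup, if additionally b is distinct from z₁, z₂ and z₃ and m₃ ≠ 1, then ζ₃ − b = (m₃/(1 − m₃)) · ( −λ(1 − |b|²)(1 − conj(a)·b)/(b − z₃)² ). -/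
open Complex

theorem stmt_9 (a b lam z₁ z₂ z₃ m₁ m₂ m₃ ζ₃ : ℂ)
    (hlam : ‖lam‖ = 1)
    (h12 : z₁ ≠ z₂) (h13 : z₁ ≠ z₃) (h23 : z₂ ≠ z₃)
    (hz1 : ‖z₁‖ = 1) (hz2 : ‖z₂‖ = 1) (hz3 : ‖z₃‖ = 1)
    (hP : ∀ z : ℂ,
      z * (z - a) * (z - b) - lam * (1 - (starRingEnd ℂ) a * z) * (1 - (starRingEnd ℂ) b * z)
        = (z - z₁) * (z - z₂) * (z - z₃))
    (hm1 : m₁ = (z₁ - a) * (z₁ - b) / ((z₁ - z₂) * (z₁ - z₃)))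
    (hm2 : m₂ = (z₂ - a) * (z₂ - b) / ((z₂ - z₁) * (z₂ - z₃)))
    (hm3 : m₃ = (z₃ - a) * (z₃ - b) / ((z₃ - z₁) * (z₃ - z₂)))
    (hsum : m₁ + m₂ ≠ 0)
    (hζ : ζ₃ = (m₁ * z₂ + m₂ * z₁) / (m₁ + m₂))
    (hb1 : b ≠ z₁) (hb2 : b ≠ z₂) (hb3 : b ≠ z₃)
    (hm3ne : m₃ ≠ 1) :
    ζ₃ - b = m₃ / (1 - m₃) * (-(lam * (1 - (‖b‖ : ℂ) ^ 2) * (1 - (starRingEnd ℂ) a * b)) / (b - z₃) ^ 2) := by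
  have d12 : z₁ - z₂ ≠ 0 := sub_ne_zero.mpr h12
  have d13 : z₁ - z₃ ≠ 0 := sub_ne_zero.mpr h13
  have d23 : z₂ - z₃ ≠ 0 := sub_ne_zero.mpr h23
  have d21 : z₂ - z₁ ≠ 0 := sub_ne_zero.mpr h12.symm
  have d31 : z₃ - z₁ ≠ 0 := sub_ne_zero.mpr h13.symm
  have d32 : z₃ - z₂ ≠ 0 := sub_ne_zero.mpr h23.symm
  have db1 : b - z₁ ≠ 0 := sub_ne_zero.mpr hb1
  have db2 : b - z₂ ≠ 0 := sub_ne_zero.mpr hb2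
  have db3 : b - z₃ ≠ 0 := sub_ne_zero.mpr hb3
  have h1m3 : 1 - m₃ ≠ 0 := sub_ne_zero.mpr (Ne.symm hm3ne)
  have habs : ((‖b‖ : ℂ)) ^ 2 = (starRingEnd ℂ) b * b := by
    rw [← Complex.normSq_eq_conj_mul_self]
    norm_cast
    exact Complex.sq_norm b
  have key : -(lam * (1 - (‖b‖ : ℂ) ^ 2) * (1 - (starRingEnd ℂ) a * b))
      = (b - z₁) * (b - z₂) * (b - z₃) := by
    have h := hP b
    rw [habs]
    linear_combination h
  have hL : m₁ + m₂ = 1 - m₃ := by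
    subst hm1 hm2 hm3
    field_simp
    ring
  have hB : m₁ * (b - z₂) * (b - z₃) + m₂ * (b - z₁) * (b - z₃) + m₃ * (b - z₁) * (b - z₂) = 0 := by
    subst hm1 hm2 hm3
    field_simp
    ring
  rw [hζ, key]
  rw [div_sub' hsum, div_mul_div_comm, div_eq_div_iff (by exact hsum) (by
    exact mul_ne_zero h1m3 (pow_ne_zero 2 db3))]
  linear_combination -(m₃*(b-z₁)*(b-z₂)*(b-z₃))*hL - (1-m₃)*(b-z₃)*hB
end

section
/- Under the stated setup, the equal-angles (tangency) identity holds at the contact point: (ζ₃ − a)(ζ₃ − b) = m₃ · (ζ₃ − z₁)(ζ₃ − z₂). Consequently, since m₃ is real, the line through z₁ and z₂ makes equal angles at ζ₃ with the segments joining ζ₃ to the foci a and b. -/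
open Complex

theorem stmt_10 (a b lam z₁ z₂ z₃ m₁ m₂ m₃ ζ₃ : ℂ)
    (hlam : ‖lam‖ = 1)
    (h12 : z₁ ≠ z₂) (h13 : z₁ ≠ z₃) (h23 : z₂ ≠ z₃)
    (hz1 : ‖z₁‖ = 1) (hz2 : ‖z₂‖ = 1) (hz3 : ‖z₃‖ = 1)
    (hP : ∀ z : ℂ,
      z * (z - a) * (z - b) - lam * (1 - (starRingEnd ℂ) a * z) * (1 - (starRingEnd ℂ) b * z)
        = (z - z₁) * (z - z₂) * (z - z₃))
    (hm1 : m₁ = (z₁ - a) * (z₁ - b) / ((z₁ - z₂) * (z₁ - z₃)))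
    (hm2 : m₂ = (z₂ - a) * (z₂ - b) / ((z₂ - z₁) * (z₂ - z₃)))
    (hm3 : m₃ = (z₃ - a) * (z₃ - b) / ((z₃ - z₁) * (z₃ - z₂)))
    (hsum : m₁ + m₂ ≠ 0)
    (hζ : ζ₃ = (m₁ * z₂ + m₂ * z₁) / (m₁ + m₂)) :
    (ζ₃ - a) * (ζ₃ - b) = m₃ * ((ζ₃ - z₁) * (ζ₃ - z₂)) ∧ m₃.im = 0 := by
  have h12' : z₁ - z₂ ≠ 0 := sub_ne_zero.mpr h12
  have h13' : z₁ - z₃ ≠ 0 := sub_ne_zero.mpr h13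
  have h23' : z₂ - z₃ ≠ 0 := sub_ne_zero.mpr h23
  have h21' : z₂ - z₁ ≠ 0 := sub_ne_zero.mpr h12.symm
  have h31' : z₃ - z₁ ≠ 0 := sub_ne_zero.mpr h13.symm
  have h32' : z₃ - z₂ ≠ 0 := sub_ne_zero.mpr h23.symm
  have hc1 : z₁ * (starRingEnd ℂ) z₁ = 1 := by
    rw [Complex.mul_conj]; norm_cast; rw [Complex.normSq_eq_norm_sq, hz1]; norm_num
  have hc2 : z₂ * (starRingEnd ℂ) z₂ = 1 := by
    rw [Complex.mul_conj]; norm_cast; rw [Complex.normSq_eq_norm_sq, hz2]; norm_num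
  have hc3 : z₃ * (starRingEnd ℂ) z₃ = 1 := by
    rw [Complex.mul_conj]; norm_cast; rw [Complex.normSq_eq_norm_sq, hz3]; norm_num
  have hz1ne : z₁ ≠ 0 := fun h => by simp [h] at hz1
  have hz2ne : z₂ ≠ 0 := fun h => by simp [h] at hz2
  have hz3ne : z₃ ≠ 0 := fun h => by simp [h] at hz3
  have hconst : lam = z₁ * z₂ * z₃ := by
    have := hP 0
    ring_nf at this
    linear_combination -this
  constructor
  · have hL : (ζ₃ - a) * (ζ₃ - b)
        = m₁ * (ζ₃ - z₂) * (ζ₃ - z₃) + m₂ * (ζ₃ - z₁) * (ζ₃ - z₃)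
          + m₃ * (ζ₃ - z₁) * (ζ₃ - z₂) := by
      rw [hm1, hm2, hm3]
      field_simp
      ring
    have eζ : ζ₃ * (m₁ + m₂) = m₁ * z₂ + m₂ * z₁ := by
      rw [hζ]; field_simp
    linear_combination hL + (ζ₃ - z₃) * eζ
  · have hE : z₃ * (z₃ - a) * (z₃ - b)
        = z₁ * z₂ * z₃ * (1 - (starRingEnd ℂ) a * z₃) * (1 - (starRingEnd ℂ) b * z₃) := by
      have := hP z₃
      rw [hconst] at this
      linear_combination this
    have hc1' : (starRingEnd ℂ) z₁ = z₁⁻¹ := eq_inv_of_mul_eq_one_left (by linear_combination hc1)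
    have hc2' : (starRingEnd ℂ) z₂ = z₂⁻¹ := eq_inv_of_mul_eq_one_left (by linear_combination hc2)
    have hc3' : (starRingEnd ℂ) z₃ = z₃⁻¹ := eq_inv_of_mul_eq_one_left (by linear_combination hc3)
    rw [← Complex.conj_eq_iff_im]
    simp only [hm3, map_div₀, map_mul, map_sub, hc1', hc2', hc3']
    rw [div_eq_div_iff (mul_ne_zero (by
        rw [← hc1', ← hc3']; exact sub_ne_zero.mpr (fun h => h13.symm ((starRingEnd ℂ).injective h)))
      (by
        rw [← hc2', ← hc3']; exact sub_ne_zero.mpr (fun h => h23.symm ((starRingEnd ℂ).injective h))))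
      (mul_ne_zero h31' h32')]
    field_simp
    have hE' : (z₃ - a) * (z₃ - b) = z₁ * z₂ * (1 - (starRingEnd ℂ) a * z₃) * (1 - (starRingEnd ℂ) b * z₃) :=
      mul_left_cancel₀ hz3ne (by linear_combination hE)
    linear_combination -(z₃-z₁)*(z₃-z₂)*hE'
end

section
/- If P ∈ ℂ[z] is a self-inversive polynomial of odd degree n, then P has at least one zero on the unit circle: there exists z ∈ ℂ with |z| = 1 and P(z) = 0. -/
open Complex Polynomial

private lemma even_card_of_fpf_involution {α : Type*} [DecidableEq α] (f : α → α)
    (hinv : ∀ x, f (f x) = x) (s : Multiset α) :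
    s.map f = s → (∀ x ∈ s, f x ≠ x) → Even (Multiset.card s) := by
  have hinj : Function.Injective f := Function.LeftInverse.injective hinv
  induction s using Multiset.strongInductionOn with
  | _ s ih =>
    intro hmap hfix
    rcases s.empty_or_exists_mem with rfl | ⟨a, ha⟩
    · simp
    · have hfa : f a ∈ s := by rw [← hmap]; exact Multiset.mem_map_of_mem f ha
      have hne : f a ≠ a := hfix a ha
      have hfa' : f a ∈ s.erase a := (Multiset.mem_erase_of_ne hne).mpr hfa
      set t := (s.erase a).erase (f a) with ht
      have hlt : t < s := lt_of_le_of_lt (Multiset.erase_le _ _)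
        (Multiset.erase_lt.mpr ha)
      have hseq : s = a ::ₘ f a ::ₘ t := by
        rw [ht, Multiset.cons_erase hfa', Multiset.cons_erase ha]
      have htmap : t.map f = t := by
        rw [ht, Multiset.map_erase _ hinj, Multiset.map_erase _ hinj, hmap, hinv a,
          Multiset.erase_comm]
      have htfix : ∀ x ∈ t, f x ≠ x := fun x hx => hfix x (Multiset.mem_of_le hlt.le hx)
      obtain ⟨k, hk⟩ := ih t hlt htmap htfix
      rw [hseq]
      exact ⟨k + 1, by simp [hk]; ring⟩

private lemma reverse_multiset_prod_X_sub_C (s : Multiset ℂ) (hs : (0 : ℂ) ∉ s) :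
    (Multiset.map (fun a => X - C a) s).prod.reverse =
      C (Multiset.map (fun a => -a) s).prod * (Multiset.map (fun a => X - C a⁻¹) s).prod := by
  induction s using Multiset.induction with
  | empty => rw [Multiset.map_zero, Multiset.prod_zero, Multiset.map_zero, Multiset.prod_zero,
      ← C_1, reverse_C]; simp
  | cons a s ih =>
    have ha : a ≠ 0 := fun h => hs (by simp [h])
    have hs' : (0 : ℂ) ∉ s := fun h => hs (Multiset.mem_cons_of_mem h)
    have hrev1 : (X - C a).reverse = C (-a) * (X - C a⁻¹) := by
      have hdeg : (X - C a).natDegree = 1 := by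
        simpa using natDegree_X_sub_C a
      rw [reverse, hdeg, sub_eq_add_neg, reflect_add, reflect_neg, reflect_C]
      have : reflect 1 (X : ℂ[X]) = 1 := reflect_one_X
      rw [this]
      rw [mul_sub, ← C_mul, neg_mul, mul_inv_cancel₀ ha]
      ring_nf
      simp [C_neg]
      ring
    rw [Multiset.map_cons, Multiset.prod_cons, reverse_mul_of_domain, hrev1, ih hs',
      Multiset.map_cons, Multiset.prod_cons, Multiset.map_cons, Multiset.prod_cons]
    rw [C_mul]
    ring

theorem stmt_14 (P : Polynomial ℂ) (hodd : Odd P.natDegree) (lam : ℂ)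
    (hlam : ‖lam‖ = 1)
    (hsi : ∀ z : ℂ, z ≠ 0 →
      P.eval z = lam * z ^ P.natDegree * (starRingEnd ℂ) (P.eval (((starRingEnd ℂ) z)⁻¹))) :
    ∃ z : ℂ, ‖z‖ = 1 ∧ P.eval z = 0 := by
  by_contra hcon
  push_neg at hcon
  have hn0 : P.natDegree ≠ 0 := by
    intro h; rw [h] at hodd; simpa using hodd
  have hP0 : P ≠ 0 := fun h => hn0 (by simp [h])
  have hlam0 : lam ≠ 0 := by
    intro h; rw [h] at hlam; simp at hlam
  set n := P.natDegree with hn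
  set Q := P.map (starRingEnd ℂ) with hQdef
  have hQ0 : Q ≠ 0 := by
    rw [hQdef, Ne, Polynomial.map_eq_zero]; exact hP0
  have hQdeg : Q.natDegree = n :=
    natDegree_map_eq_of_injective (starRingEnd ℂ).injective P
  -- evaluation of Q at conj-related points
  have hQeval : ∀ w : ℂ, Q.eval ((starRingEnd ℂ) w) = (starRingEnd ℂ) (P.eval w) := by
    intro w
    rw [hQdef, eval_map, eval₂_at_apply]
  -- the key polynomial identity
  have key : P = C lam * Q.reverse := by
    have hroot : ∀ z : ℂ, z ≠ 0 → (P - C lam * Q.reverse).IsRoot z := by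
      intro z hz
      have hz' : z⁻¹ ≠ 0 := inv_ne_zero hz
      letI : Invertible (z⁻¹ : ℂ) := invertibleOfNonzero hz'
      have hrev : Q.reverse.eval z * (z⁻¹) ^ n = Q.eval z⁻¹ := by
        have h := eval₂_reverse_mul_pow (RingHom.id ℂ) (z⁻¹) Q
        rw [invOf_eq_inv, inv_inv, hQdeg] at h
        exact h
      have hrev' : Q.reverse.eval z = z ^ n * Q.eval z⁻¹ := by
        have hzn : (z : ℂ) ^ n ≠ 0 := pow_ne_zero _ hz
        rw [← hrev, mul_left_comm, ← mul_pow, mul_inv_cancel₀ hz, one_pow, mul_one]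
      have hQz : Q.eval z⁻¹ = (starRingEnd ℂ) (P.eval (((starRingEnd ℂ) z)⁻¹)) := by
        have : (starRingEnd ℂ) (((starRingEnd ℂ) z)⁻¹) = z⁻¹ := by
          rw [map_inv₀, Complex.conj_conj]
        rw [← this, hQeval]
      simp only [IsRoot, eval_sub, eval_mul, eval_C, hrev', hQz, hsi z hz]
      ring
    have hinf : Set.Infinite {z : ℂ | (P - C lam * Q.reverse).IsRoot z} := by
      apply Set.Infinite.mono (s := {(0 : ℂ)}ᶜ)
      · intro z hz; exact hroot z hz
      · exact (Set.finite_singleton 0).infinite_compl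
    have := eq_zero_of_infinite_isRoot _ hinf
    linear_combination (norm := ring_nf) this
  -- constant coefficient is nonzero
  have ha0 : P.coeff 0 ≠ 0 := by
    have h0 : P.coeff 0 = lam * Q.leadingCoeff := by
      conv_lhs => rw [key]
      rw [mul_comm, coeff_mul_C, coeff_zero_reverse, mul_comm]
    rw [h0]
    exact mul_ne_zero hlam0 (leadingCoeff_ne_zero.mpr hQ0)
  have hQc0 : Q.coeff 0 ≠ 0 := by
    rw [hQdef, coeff_map]
    simpa using ha0
  have h0Q : (0 : ℂ) ∉ Q.roots := by
    intro h
    have h2 : Q.eval 0 = 0 := (mem_roots hQ0).mp h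
    exact hQc0 (by rwa [coeff_zero_eq_eval_zero])
  -- factor Q and compute roots of its reverse
  have hQfact : Q = C Q.leadingCoeff * (Q.roots.map fun a => X - C a).prod :=
    (IsAlgClosed.splits Q).eq_prod_roots
  have hrevroots : Q.reverse.roots = Q.roots.map (fun a => a⁻¹) := by
    have hc : Q.leadingCoeff ≠ 0 := leadingCoeff_ne_zero.mpr hQ0
    have hprodne : (Multiset.map (fun a => -a) Q.roots).prod ≠ 0 := by
      apply Multiset.prod_ne_zero
      intro h
      obtain ⟨a, ha, h⟩ := Multiset.mem_map.mp h
      exact h0Q (by rwa [neg_eq_zero.mp h] at ha)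
    conv_lhs => rw [hQfact]
    rw [reverse_mul_of_domain, reverse_C, reverse_multiset_prod_X_sub_C _ h0Q,
      ← mul_assoc, ← C_mul, roots_C_mul _ (mul_ne_zero hc hprodne)]
    have h := roots_multiset_prod_X_sub_C (Q.roots.map fun a => a⁻¹)
    rw [Multiset.map_map] at h
    exact h
  -- roots of P are invariant under z ↦ (conj z)⁻¹
  have hsplitP : P.Splits := IsAlgClosed.splits P
  have hQroots : Q.roots = P.roots.map (starRingEnd ℂ) := hsplitP.roots_map_of_injective (starRingEnd ℂ).injective
  have hmapped : P.roots.map (fun z => ((starRingEnd ℂ) z)⁻¹) = P.roots := by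
    conv_rhs => rw [key]
    rw [roots_C_mul _ hlam0, hrevroots, hQroots, Multiset.map_map]
    rfl
  -- the involution has no fixed points on the roots
  have hfix : ∀ x ∈ P.roots, ((starRingEnd ℂ) x)⁻¹ ≠ x := by
    intro x hx heq
    have hxroot : P.eval x = 0 := (mem_roots hP0).mp hx
    have hx0 : x ≠ 0 := by
      intro h
      rw [h, ← coeff_zero_eq_eval_zero] at hxroot
      exact ha0 hxroot
    have hcx : (starRingEnd ℂ) x ≠ 0 := by simpa using hx0
    have hconj : (starRingEnd ℂ) x = x⁻¹ := by
      have h2 := congrArg (fun w : ℂ => w⁻¹) heq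
      simpa using h2
    have h1 : x * (starRingEnd ℂ) x = 1 := by
      rw [hconj]; exact mul_inv_cancel₀ hx0
    have : ‖x‖ = 1 := by
      have h2 : Complex.normSq x = 1 := by
        have := Complex.mul_conj x
        rw [h1] at this
        exact_mod_cast this.symm
      rw [← Complex.sq_norm] at h2
      nlinarith [norm_nonneg x]
    exact hcon x this hxroot
  have hinv : ∀ x : ℂ, ((starRingEnd ℂ) (((starRingEnd ℂ) x)⁻¹))⁻¹ = x := by
    intro x
    rw [map_inv₀, Complex.conj_conj, inv_inv]
  have heven : Even (Multiset.card P.roots) :=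
    even_card_of_fpf_involution (fun z => ((starRingEnd ℂ) z)⁻¹) hinv P.roots hmapped hfix
  have hcard : Multiset.card P.roots = n := by
    have h := hsplitP.natDegree_eq_card_roots
    exact h.symm
  rw [hcard] at heven
  exact (Nat.not_odd_iff_even.mpr heven) hodd
end

section
/- Let a, b, λ ∈ ℂ with |a| < 1, |b| < 1 and |λ| = 1. Then every root of the cubic P_λ(z) = z(z − a)(z − b) − λ(1 − conj(a)z)(1 − conj(b)z) lies on the unit circle: if P_λ(z) = 0 then |z| = 1. -/
open Complex

lemma key_normSq (a z : ℂ) :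
    Complex.normSq (1 - (starRingEnd ℂ) a * z) - Complex.normSq (z - a)
      = (1 - Complex.normSq a) * (1 - Complex.normSq z) := by
  simp only [Complex.normSq_apply, Complex.sub_re, Complex.sub_im, Complex.mul_re,
    Complex.mul_im, Complex.conj_re, Complex.conj_im, Complex.one_re, Complex.one_im]
  ring

theorem stmt_15 (a b lam : ℂ) (ha : ‖a‖ < 1) (hb : ‖b‖ < 1)
    (hlam : ‖lam‖ = 1) (z : ℂ)
    (hroot : z * (z - a) * (z - b)
        - lam * (1 - (starRingEnd ℂ) a * z) * (1 - (starRingEnd ℂ) b * z) = 0) :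
    ‖z‖ = 1 := by
  have heq : z * (z - a) * (z - b)
      = lam * (1 - (starRingEnd ℂ) a * z) * (1 - (starRingEnd ℂ) b * z) :=
    sub_eq_zero.mp hroot
  have habs : ‖z‖ * ‖z - a‖ * ‖z - b‖
      = ‖1 - (starRingEnd ℂ) a * z‖ * ‖1 - (starRingEnd ℂ) b * z‖ := by
    have := congrArg (‖·‖) heq
    simpa [map_mul, hlam] using this
  have hna : Complex.normSq a < 1 := by
    rw [← Complex.sq_norm]; nlinarith [norm_nonneg a]
  have hnb : Complex.normSq b < 1 := by
    rw [← Complex.sq_norm]; nlinarith [norm_nonneg b]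
  by_contra h
  rcases lt_or_gt_of_ne h with hlt | hgt
  · -- |z| < 1
    have hnz : Complex.normSq z < 1 := by
      rw [← Complex.sq_norm]; nlinarith [norm_nonneg z]
    have h1 : Complex.normSq (z - a) < Complex.normSq (1 - (starRingEnd ℂ) a * z) := by
      have hp := mul_pos (by linarith : (0:ℝ) < 1 - Complex.normSq a)
        (by linarith : (0:ℝ) < 1 - Complex.normSq z)
      linarith [key_normSq a z]
    have h2 : Complex.normSq (z - b) < Complex.normSq (1 - (starRingEnd ℂ) b * z) := by
      have hp := mul_pos (by linarith : (0:ℝ) < 1 - Complex.normSq b)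
        (by linarith : (0:ℝ) < 1 - Complex.normSq z)
      linarith [key_normSq b z]
    have hA : ‖z - a‖ < ‖1 - (starRingEnd ℂ) a * z‖ := by
      apply lt_of_pow_lt_pow_left₀ 2 (norm_nonneg _)
      rw [Complex.sq_norm, Complex.sq_norm]; exact h1
    have hB : ‖z - b‖ < ‖1 - (starRingEnd ℂ) b * z‖ := by
      apply lt_of_pow_lt_pow_left₀ 2 (norm_nonneg _)
      rw [Complex.sq_norm, Complex.sq_norm]; exact h2
    have pA : 0 < ‖1 - (starRingEnd ℂ) a * z‖ :=
      lt_of_le_of_lt (norm_nonneg _) hA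
    have pB : 0 < ‖1 - (starRingEnd ℂ) b * z‖ :=
      lt_of_le_of_lt (norm_nonneg _) hB
    nlinarith [norm_nonneg z, norm_nonneg (z - a), norm_nonneg (z - b),
      mul_pos pA pB, mul_nonneg (norm_nonneg (z - a)) (norm_nonneg (z - b))]
  · -- |z| > 1
    have hnz : (1:ℝ) < Complex.normSq z := by
      rw [← Complex.sq_norm]; nlinarith [norm_nonneg z]
    have h1 : Complex.normSq (1 - (starRingEnd ℂ) a * z) < Complex.normSq (z - a) := by
      have hp := mul_pos (by linarith : (0:ℝ) < 1 - Complex.normSq a)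
        (by linarith : (0:ℝ) < Complex.normSq z - 1)
      nlinarith [key_normSq a z]
    have h2 : Complex.normSq (1 - (starRingEnd ℂ) b * z) < Complex.normSq (z - b) := by
      have hp := mul_pos (by linarith : (0:ℝ) < 1 - Complex.normSq b)
        (by linarith : (0:ℝ) < Complex.normSq z - 1)
      nlinarith [key_normSq b z]
    have hA : ‖1 - (starRingEnd ℂ) a * z‖ < ‖z - a‖ := by
      apply lt_of_pow_lt_pow_left₀ 2 (norm_nonneg _)
      rw [Complex.sq_norm, Complex.sq_norm]; exact h1
    have hB : ‖1 - (starRingEnd ℂ) b * z‖ < ‖z - b‖ := by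
      apply lt_of_pow_lt_pow_left₀ 2 (norm_nonneg _)
      rw [Complex.sq_norm, Complex.sq_norm]; exact h2
    have pA : 0 < ‖z - a‖ := lt_of_le_of_lt (norm_nonneg _) hA
    have pB : 0 < ‖z - b‖ := lt_of_le_of_lt (norm_nonneg _) hB
    nlinarith [norm_nonneg (1 - (starRingEnd ℂ) a * z),
      norm_nonneg (1 - (starRingEnd ℂ) b * z), mul_pos pA pB,
      mul_nonneg (norm_nonneg (1 - (starRingEnd ℂ) a * z))
        (norm_nonneg (1 - (starRingEnd ℂ) b * z))]
end
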